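/- arXiv:1704.06401 — 11 statements merged into one kernel-verified Lean document; each statement's English description precedes it below -/
import Mathlib

section
/- Let u, v : ℝ → ℝ be differentiable functions satisfying the system u'(s) = 2 u(s) v(s) and v'(s) = (v(s))² − (u(s))² + 1 for all s ∈ ℝ. Then u(s) ≠ 0 for every s ∈ ℝ. -/
open Set Real

/-- If `u v : ℝ → ℝ` are differentiable and satisfy `u' = 2uv` and
`v' = v² − u² + 1` on all of `ℝ`, then `u` vanishes nowhere. -/
theorem stmt_1 (u v : ℝ → ℝ) (hu : Differentiable ℝ u) (hv : Differentiable ℝ v)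
    (hu' : ∀ s : ℝ, deriv u s = 2 * u s * v s)
    (hv' : ∀ s : ℝ, deriv v s = (v s) ^ 2 - (u s) ^ 2 + 1) :
    ∀ s : ℝ, u s ≠ 0 := by
  by_contra h
  push_neg at h
  obtain ⟨s₀, hs₀⟩ := h
  -- Step 1: u ≡ 0 by uniqueness of solutions
  have huzero : ∀ s : ℝ, u s = 0 := by
    intro s
    set a : ℝ := min s s₀ - 1 with ha
    set b : ℝ := max s s₀ + 1 with hb
    have hab : a < b := by
      have h1 : min s s₀ ≤ max s s₀ := le_trans (min_le_left _ _) (le_max_left _ _)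
      linarith
    -- clamp
    set c : ℝ → ℝ := fun t => max a (min b t) with hc
    have hcmem : ∀ t, c t ∈ Icc a b := by
      intro t
      constructor
      · exact le_max_left _ _
      · exact max_le hab.le (min_le_left _ _)
    have hceq : ∀ t ∈ Icc a b, c t = t := by
      intro t ht
      simp only [hc]
      rw [min_eq_right ht.2, max_eq_right ht.1]
    -- bound for 2v on [a,b]
    obtain ⟨C, hC⟩ : ∃ C, ∀ t ∈ Icc a b, |2 * v t| ≤ C := by
      obtain ⟨C, hC⟩ := (isCompact_Icc (a := a) (b := b)).exists_bound_of_continuousOn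
        (Continuous.continuousOn (continuous_const.mul hv.continuous))
      exact ⟨C, fun t ht => by have := hC t ht; rwa [Real.norm_eq_abs] at this⟩
    have hC0 : 0 ≤ C := le_trans (abs_nonneg _) (hC a ⟨le_refl a, hab.le⟩)
    set K : NNReal := ⟨C, hC0⟩ with hK
    set F : ℝ → ℝ → ℝ := fun t x => 2 * v (c t) * x with hF
    have hlip : ∀ t, LipschitzOnWith K (F t) univ := by
      intro t
      apply LipschitzWith.lipschitzOnWith
      apply LipschitzWith.of_dist_le_mul
      intro x y
      simp only [hF, Real.dist_eq]
      rw [← mul_sub, abs_mul]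
      apply mul_le_mul_of_nonneg_right _ (abs_nonneg _)
      exact hC _ (hcmem t)
    have key : EqOn u (fun _ => (0:ℝ)) (Icc a b) := by
      apply ODE_solution_unique_of_mem_Icc (v := F) (t₀ := s₀) (K := K) (s := fun _ => univ)
        (fun t _ => hlip t)
      · constructor
        · have : min s s₀ ≤ s₀ := min_le_right _ _
          linarith
        · have : s₀ ≤ max s s₀ := le_max_right _ _
          linarith
      · exact hu.continuous.continuousOn
      · intro t ht
        have := (hu t).hasDerivAt
        rw [hu' t] at this
        convert this using 1
        simp only [hF]
        rw [hceq t (Ioo_subset_Icc_self ht)]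
        ring
      · intro t _; trivial
      · exact continuousOn_const
      · intro t ht
        simpa [hF] using (hasDerivAt_const t (0:ℝ))
      · intro t _; trivial
      · exact hs₀
    have hsmem : s ∈ Icc a b := by
      constructor
      · have : min s s₀ ≤ s := min_le_left _ _
        linarith
      · have : s ≤ max s s₀ := le_max_left _ _
        linarith
    exact key hsmem
  -- Step 2: v' = v² + 1, so arctan ∘ v - id has zero derivative, contradiction
  set g : ℝ → ℝ := fun s => Real.arctan (v s) - s with hg
  have hgd : ∀ s, HasDerivAt g 0 s := by
    intro s
    have h1 : HasDerivAt (fun s => Real.arctan (v s)) (1 / (1 + (v s) ^ 2) * deriv v s) s :=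
      (Real.hasDerivAt_arctan (v s)).comp s (hv s).hasDerivAt
    have h2 : HasDerivAt (fun s : ℝ => s) 1 s := hasDerivAt_id s
    have h3 := h1.sub h2
    refine h3.congr_deriv ?_
    symm
    rw [hv' s, huzero s]
    have hpos : (0:ℝ) < 1 + (v s) ^ 2 := by positivity
    field_simp
    ring
  have hconst : ∀ s : ℝ, g s = g 0 := by
    intro s
    have := is_const_of_deriv_eq_zero (f := g)
      (fun t => (hgd t).differentiableAt) (fun t => (hgd t).deriv) s 0
    exact this
  have h1 := hconst (g 0 + 10)
  simp only [hg] at h1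
  have hb1 := abs_lt.mpr ⟨Real.neg_pi_div_two_lt_arctan (v (Real.arctan (v 0) - 0 + 10)), Real.arctan_lt_pi_div_two _⟩
  have hb2 := abs_lt.mpr ⟨Real.neg_pi_div_two_lt_arctan (v 0), Real.arctan_lt_pi_div_two (v 0)⟩
  have hpi : Real.pi < 3.15 := Real.pi_lt_d2
  have h3 := abs_lt.mp hb1
  have h4 := abs_lt.mp hb2
  linarith
end

section
/- Let w : ℝ → ℂ be a differentiable function satisfying w'(s) = (w(s))² + 1 for all s ∈ ℝ. Then w(s) is not real (i.e., Im w(s) ≠ 0) for every s ∈ ℝ. -/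
open Real intervalIntegral

/-- If `w : ℝ → ℂ` is differentiable and satisfies the Riccati equation
`w' = w² + 1` on all of `ℝ`, then `w s` is never real. -/
theorem stmt_2 (w : ℝ → ℂ) (hw : Differentiable ℝ w)
    (hw' : ∀ s : ℝ, deriv w s = (w s) ^ 2 + 1) :
    ∀ s : ℝ, (w s).im ≠ 0 := by
  intro s₀ h0
  set u : ℝ → ℝ := fun t => (w t).im with hu_def
  set v : ℝ → ℝ := fun t => (w t).re with hv_def
  -- derivatives of u and v
  have hu : ∀ s, HasDerivAt u (2 * v s * u s) s := by
    intro s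
    have h := (Complex.imCLM.hasFDerivAt.comp_hasDerivAt s (hw s).hasDerivAt)
    have him : Complex.imCLM (deriv w s) = 2 * v s * u s := by
      rw [hw' s]
      simp [Complex.imCLM, pow_two, Complex.mul_im, hu_def, hv_def]
      ring
    rw [him] at h
    exact h
  have hv : ∀ s, HasDerivAt v (v s ^ 2 - u s ^ 2 + 1) s := by
    intro s
    have h := (Complex.reCLM.hasFDerivAt.comp_hasDerivAt s (hw s).hasDerivAt)
    have hre : Complex.reCLM (deriv w s) = v s ^ 2 - u s ^ 2 + 1 := by
      rw [hw' s]
      simp [Complex.reCLM, pow_two, Complex.mul_re, hu_def, hv_def]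
    rw [hre] at h
    exact h
  have hvc : Continuous v := Complex.continuous_re.comp hw.continuous
  -- antiderivative of v
  set V : ℝ → ℝ := fun s => ∫ t in s₀..s, v t with hV_def
  have hV : ∀ s, HasDerivAt V (v s) s := fun s =>
    (hvc.integral_hasStrictDerivAt s₀ s).hasDerivAt
  -- φ = u * exp(-2V) has zero derivative
  set φ : ℝ → ℝ := fun s => u s * Real.exp (-2 * V s) with hφ_def
  have hφ : ∀ s, HasDerivAt φ 0 s := by
    intro s
    have he : HasDerivAt (fun s => Real.exp (-2 * V s))
        (Real.exp (-2 * V s) * (-2 * v s)) s := by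
      have := ((hV s).const_mul (-2)).exp
      simpa using this
    have : HasDerivAt (fun y => u y * Real.exp (-2 * V y))
        (2 * v s * u s * Real.exp (-2 * V s) + u s * (Real.exp (-2 * V s) * (-2 * v s))) s :=
      (hu s).mul he
    convert this using 1
    ring
  have hφc : ∀ s, φ s = 0 := by
    intro s
    have hdiff : Differentiable ℝ φ := fun s => (hφ s).differentiableAt
    have := is_const_of_deriv_eq_zero hdiff (fun x => (hφ x).deriv) s s₀
    simp only [hφ_def] at this ⊢
    rw [this, show u s₀ = 0 from h0, zero_mul]
  have huz : ∀ s, u s = 0 := by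
    intro s
    have := hφc s
    simp only [hφ_def] at this
    rcases mul_eq_zero.1 this with h | h
    · exact h
    · exact absurd h (Real.exp_ne_zero _)
  -- now v solves v' = v² + 1, so arctan ∘ v - id is constant
  have hg : ∀ s, HasDerivAt (fun s => Real.arctan (v s) - s) 0 s := by
    intro s
    have h1 : HasDerivAt v (v s ^ 2 + 1) s := by
      have := hv s; rw [huz s] at this; simpa using this
    have h2 := h1.arctan
    have h3 : HasDerivAt (fun s => Real.arctan (v s) - s)
        (1 / (1 + v s ^ 2) * (v s ^ 2 + 1) - 1) s := h2.sub (hasDerivAt_id s)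
    convert h3 using 1
    have : 1 + v s ^ 2 ≠ 0 := by positivity
    field_simp
    ring
  have hgdiff : Differentiable ℝ (fun s => Real.arctan (v s) - s) :=
    fun s => (hg s).differentiableAt
  have hconst := is_const_of_deriv_eq_zero hgdiff (fun x => (hg x).deriv)
    (s₀ + π) s₀
  -- contradiction
  have h1 : Real.arctan (v (s₀ + π)) < π / 2 := Real.arctan_lt_pi_div_two _
  have h2 : -(π / 2) < Real.arctan (v s₀) := Real.neg_pi_div_two_lt_arctan _
  have hπ := Real.pi_pos
  nlinarith [hconst]
end

section
/- Let n ≥ 1 and let C : ℝ → Matrix (Fin n) (Fin n) ℝ be a differentiable map (derivative taken in the normed space of n×n real matrices) satisfying C'(s) = (C(s))² + 1 for all s ∈ ℝ, where 1 denotes the identity matrix and (C(s))² the matrix square. Then for every s ∈ ℝ and every real number λ, the matrix C(s) − λ·1 is invertible; that is, C(s) has no real eigenvalue. -/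
attribute [local instance] Matrix.normedAddCommGroup Matrix.normedSpace

open Real Matrix

private lemma mat_norm_mul_le {n : ℕ} (A B : Matrix (Fin n) (Fin n) ℝ) :
    ‖A * B‖ ≤ n * ‖A‖ * ‖B‖ := by
  have h0 : (0:ℝ) ≤ n * ‖A‖ * ‖B‖ := by positivity
  rw [Matrix.norm_le_iff h0]
  intro i j
  calc ‖(A * B) i j‖ = ‖∑ k, A i k * B k j‖ := by rw [Matrix.mul_apply]
    _ ≤ ∑ k : Fin n, ‖A i k * B k j‖ := norm_sum_le _ _
    _ ≤ ∑ _k : Fin n, ‖A‖ * ‖B‖ := Finset.sum_le_sum fun k _ => by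
        rw [norm_mul]
        exact mul_le_mul (A.norm_entry_le_entrywise_sup_norm)
          (B.norm_entry_le_entrywise_sup_norm) (norm_nonneg _) (norm_nonneg _)
    _ = n * ‖A‖ * ‖B‖ := by simp [mul_assoc]


/-- If `C : ℝ → Matrix (Fin n) (Fin n) ℝ` is differentiable and satisfies the
matrix Riccati equation `C' = C² + 1` on all of `ℝ`, then `C s` has no real
eigenvalue: `C s - λ • 1` is invertible for every `s` and every real `λ`. -/
theorem stmt_3 (n : ℕ) (hn : 1 ≤ n) (C : ℝ → Matrix (Fin n) (Fin n) ℝ)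
    (hC : Differentiable ℝ C)
    (hC' : ∀ s : ℝ, deriv C s = C s ^ 2 + 1) :
    ∀ (s lam : ℝ), IsUnit (C s - lam • (1 : Matrix (Fin n) (Fin n) ℝ)) := by
  intro s lam
  by_contra hunit
  set C₀ := C s with hC₀def
  -- get an eigenvector
  have hdet : (C s - lam • 1).det = 0 := by
    by_contra h
    exact hunit ((Matrix.isUnit_iff_isUnit_det _).2 (isUnit_iff_ne_zero.2 h))
  obtain ⟨v, hv0, hv⟩ := (Matrix.exists_mulVec_eq_zero_iff).2 hdet
  have heig : C₀ *ᵥ v = lam • v := by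
    have := hv
    rw [Matrix.sub_mulVec, sub_eq_zero] at this
    rw [this, Matrix.smul_mulVec, Matrix.one_mulVec]
  -- shifted solution
  set D : ℝ → Matrix (Fin n) (Fin n) ℝ := fun t => C (s + t) with hDdef
  have hD : ∀ t, HasDerivAt D (D t ^ 2 + 1) t := by
    intro t
    have h1 : HasDerivAt (fun t : ℝ => s + t) 1 t := by
      simpa using (hasDerivAt_id t).const_add s
    have h2 : HasDerivAt C (C (s + t) ^ 2 + 1) (s + t) := by
      have e := hC' (s + t)
      rw [← e]
      exact (hC (s + t)).hasDerivAt
    have := h2.scomp t h1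
    rw [one_smul] at this
    exact this
  -- the auxiliary matrix function Z
  set Z : ℝ → Matrix (Fin n) (Fin n) ℝ := fun t =>
    Real.cos t • D t - Real.sin t • (D t * C₀) - Real.sin t • (1 : Matrix (Fin n) (Fin n) ℝ)
      - Real.cos t • C₀ with hZdef
  -- right-multiplication by C₀ as a continuous linear map
  let R : Matrix (Fin n) (Fin n) ℝ →L[ℝ] Matrix (Fin n) (Fin n) ℝ :=
    (LinearMap.mulRight ℝ C₀).toContinuousLinearMap
  have hZ : ∀ t, HasDerivAt Z (D t * Z t) t := by
    intro t
    have hDC : HasDerivAt (fun t => D t * C₀) ((D t ^ 2 + 1) * C₀) t := by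
      have := R.hasFDerivAt.comp_hasDerivAt t (hD t)
      exact this
    have h1 : HasDerivAt (fun t => Real.cos t • D t)
        (Real.cos t • (D t ^ 2 + 1) + (-Real.sin t) • D t) t :=
      (Real.hasDerivAt_cos t).smul (hD t)
    have h2 : HasDerivAt (fun t => Real.sin t • (D t * C₀))
        (Real.sin t • ((D t ^ 2 + 1) * C₀) + Real.cos t • (D t * C₀)) t :=
      (Real.hasDerivAt_sin t).smul hDC
    have h3 : HasDerivAt (fun t => Real.sin t • (1 : Matrix (Fin n) (Fin n) ℝ))
        (Real.cos t • (1 : Matrix (Fin n) (Fin n) ℝ)) t := by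
      exact (Real.hasDerivAt_sin t).smul_const
        (1 : Matrix (Fin n) (Fin n) ℝ)
    have h4 : HasDerivAt (fun t => Real.cos t • C₀) ((-Real.sin t) • C₀) t := by
      exact (Real.hasDerivAt_cos t).smul_const C₀
    have h := ((h1.sub h2).sub h3).sub h4
    refine h.congr_deriv ?_
    simp only [hZdef, mul_sub, Matrix.mul_smul, mul_one, mul_add, add_mul, one_mul,
      smul_add, smul_sub, ← mul_assoc, ← pow_two, neg_smul]
    abel
  -- choose t₀ with cos t₀ = lam * sin t₀ and sin t₀ > 0
  set a := Real.arctan lam with hadef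
  set t₀ := π / 2 - a with ht₀def
  have ht₀pos : 0 < t₀ := by
    have := Real.arctan_lt_pi_div_two lam
    simp only [ht₀def]; linarith
  have hsin : Real.sin t₀ = Real.cos a := by
    rw [ht₀def, Real.sin_pi_div_two_sub]
  have hcos : Real.cos t₀ = Real.sin a := by
    rw [ht₀def, Real.cos_pi_div_two_sub]
  have hcosa : 0 < Real.cos a := Real.cos_arctan lam ▸ by positivity
  have htan : Real.sin a = lam * Real.cos a := by
    have := Real.tan_arctan lam
    rw [Real.tan_eq_sin_div_cos] at this
    field_simp at this
    linarith [this]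
  -- Gronwall: Z vanishes on [0, t₀]
  have hDcont : Continuous D := hC.continuous.comp (continuous_const.add continuous_id)
  obtain ⟨B, hB⟩ := (isCompact_Icc (a := (0:ℝ)) (b := t₀)).exists_bound_of_continuousOn
    (hDcont.continuousOn)
  set K : ℝ := n * max B 0 with hKdef
  have hZcont : Continuous Z := by
    exact Differentiable.continuous fun t => (hZ t).differentiableAt
  have hZ0 : Z 0 = 0 := by
    simp [hZdef, hDdef, ← hC₀def]
  have hbound : ∀ x ∈ Set.Ico (0:ℝ) t₀, ‖D x * Z x‖ ≤ K * ‖Z x‖ + 0 := by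
    intro x hx
    have h1 : ‖D x * Z x‖ ≤ n * ‖D x‖ * ‖Z x‖ := mat_norm_mul_le _ _
    have h2 : ‖D x‖ ≤ max B 0 := le_trans (hB x (Set.mem_Icc.2 ⟨hx.1, hx.2.le⟩)) (le_max_left _ _)
    have : (n : ℝ) * ‖D x‖ * ‖Z x‖ ≤ K * ‖Z x‖ := by
      rw [hKdef]
      have : (n : ℝ) * ‖D x‖ ≤ n * max B 0 :=
        mul_le_mul_of_nonneg_left h2 (by positivity)
      exact mul_le_mul_of_nonneg_right this (norm_nonneg _)
    linarith
  have hZt₀ : Z t₀ = 0 := by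
    have := norm_le_gronwallBound_of_norm_deriv_right_le
      (f := Z) (f' := fun t => D t * Z t) (δ := 0) (K := K) (ε := 0)
      (hZcont.continuousOn)
      (fun x _ => (hZ x).hasDerivWithinAt)
      (by simp [hZ0]) hbound t₀ (Set.mem_Icc.2 ⟨ht₀pos.le, le_refl _⟩)
    rw [gronwallBound_ε0_δ0] at this
    exact norm_le_zero_iff.1 this
  -- evaluate Z t₀ on the eigenvector v
  have hvec : Z t₀ *ᵥ v = (Real.cos t₀ - lam * Real.sin t₀) • (D t₀ *ᵥ v)
      - (Real.sin t₀ + lam * Real.cos t₀) • v := by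
    simp only [hZdef, Matrix.sub_mulVec, Matrix.smul_mulVec, Matrix.one_mulVec,
      ← Matrix.mulVec_mulVec, heig]
    rw [Matrix.mulVec_smul]
    simp only [sub_smul, add_smul, smul_smul]
    module
  rw [hZt₀] at hvec
  have hcoef1 : Real.cos t₀ - lam * Real.sin t₀ = 0 := by
    rw [hcos, hsin, htan]; ring
  have hcoef2 : Real.sin t₀ + lam * Real.cos t₀ = (1 + lam ^ 2) * Real.cos a := by
    rw [hcos, hsin, htan]; ring
  rw [hcoef1, hcoef2] at hvec
  have hpos : (1 + lam ^ 2) * Real.cos a ≠ 0 := by positivity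
  have : ((1 + lam ^ 2) * Real.cos a) • v = 0 := by
    have := hvec.symm
    simpa [Matrix.zero_mulVec] using this
  exact hv0 ((smul_eq_zero.1 this).resolve_left hpos)
end

section
/- Let n ≥ 1 be an odd natural number. Then there is no differentiable map C : ℝ → Matrix (Fin n) (Fin n) ℝ satisfying C'(s) = (C(s))² + 1 for all s ∈ ℝ, where 1 denotes the identity matrix and (C(s))² the matrix square. -/
attribute [local instance] Matrix.normedAddCommGroup Matrix.normedSpace

open Polynomial Filter Set

/-- A monic real polynomial of odd degree has a real root. -/
lemma aux_exists_real_root_of_monic_odd (p : Polynomial ℝ) (hm : p.Monic)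
    (h : Odd p.natDegree) : ∃ x, p.eval x = 0 := by
  have hdeg0 : p.natDegree ≠ 0 := by
    intro h0
    rw [h0] at h
    simp at h
  have hdeg : 0 < p.degree := natDegree_pos_iff_degree_pos.mp (Nat.pos_of_ne_zero hdeg0)
  have htop : Tendsto (fun x => p.eval x) atTop atTop :=
    p.tendsto_atTop_of_leadingCoeff_nonneg hdeg (by rw [hm.leadingCoeff]; norm_num)
  set q := p.comp (-X) with hq
  have hXdeg : (-X : ℝ[X]).natDegree = 1 := by simp
  have hqdeg : q.natDegree = p.natDegree := by
    rw [hq, natDegree_comp, hXdeg, mul_one]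
  have hql : q.leadingCoeff = -1 := by
    rw [hq, leadingCoeff_comp (by rw [hXdeg]; norm_num), hm.leadingCoeff]
    have : (-X : ℝ[X]).leadingCoeff = -1 := by simp
    rw [this, h.neg_one_pow, one_mul]
  have hqdeg' : 0 < q.degree := by
    apply natDegree_pos_iff_degree_pos.mp
    rw [hqdeg]
    exact Nat.pos_of_ne_zero hdeg0
  have hbot : Tendsto (fun x => q.eval x) atTop atBot :=
    q.tendsto_atBot_of_leadingCoeff_nonpos hqdeg' (by rw [hql]; norm_num)
  obtain ⟨a, ha⟩ := (htop.eventually (eventually_ge_atTop (1 : ℝ))).exists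
  obtain ⟨b, hb⟩ := (hbot.eventually (eventually_le_atBot (-1 : ℝ))).exists
  have hqb : p.eval (-b) ≤ -1 := by rwa [hq, eval_comp, eval_neg, eval_X] at hb
  have hc : ContinuousOn (fun x => p.eval x) (Set.uIcc (-b) a) := p.continuous.continuousOn
  have h0 : (0 : ℝ) ∈ Set.uIcc (p.eval (-b)) (p.eval a) := by
    rw [Set.mem_uIcc]
    exact Or.inl ⟨by linarith, by linarith⟩
  obtain ⟨x, _, hx⟩ := intermediate_value_uIcc hc h0
  exact ⟨x, hx⟩

/-- A real square matrix of odd size has a real eigenvalue (det (A - l•1) = 0). -/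
lemma aux_exists_eigen {n : ℕ} (hodd : Odd n) (A : Matrix (Fin n) (Fin n) ℝ) :
    ∃ l : ℝ, (A - l • (1 : Matrix (Fin n) (Fin n) ℝ)).det = 0 := by
  have hmon := A.charpoly_monic
  have hdeg : A.charpoly.natDegree = n := by
    rw [A.charpoly_natDegree_eq_dim, Fintype.card_fin]
  obtain ⟨l, hl⟩ := aux_exists_real_root_of_monic_odd A.charpoly hmon (by rwa [hdeg])
  refine ⟨l, ?_⟩
  have h1 : (Polynomial.eval (Matrix.scalar (Fin n) l) (matPolyEquiv (Matrix.charmatrix A))).det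
      = 0 := by
    rw [← eval_det]
    exact hl
  rw [Matrix.matPolyEquiv_charmatrix, Polynomial.eval_sub, Polynomial.eval_X,
    Polynomial.eval_C] at h1
  have hscalar : (Matrix.scalar (Fin n) l) = l • (1 : Matrix (Fin n) (Fin n) ℝ) := by
    ext i j
    by_cases hij : i = j <;>
      simp [Matrix.scalar, Matrix.smul_apply, Matrix.one_apply, Matrix.diagonal, hij]
  rw [hscalar] at h1
  have : A - l • (1 : Matrix (Fin n) (Fin n) ℝ)
      = -(l • (1 : Matrix (Fin n) (Fin n) ℝ) - A) := by abel
  rw [this, Matrix.det_neg, h1, mul_zero]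

lemma aux_norm_mulVec_le {n : ℕ} (A : Matrix (Fin n) (Fin n) ℝ) (z : Fin n → ℝ) :
    ‖A.mulVec z‖ ≤ (n * ‖A‖) * ‖z‖ := by
  have hnn : (0 : ℝ) ≤ (n * ‖A‖) * ‖z‖ := by positivity
  rw [pi_norm_le_iff_of_nonneg hnn]
  intro i
  have : A.mulVec z i = ∑ j, A i j * z j := by
    simp [Matrix.mulVec, dotProduct]
  rw [this]
  calc ‖∑ j, A i j * z j‖ ≤ ∑ j, ‖A i j * z j‖ := norm_sum_le _ _
    _ ≤ ∑ _j : Fin n, ‖A‖ * ‖z‖ := by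
        refine Finset.sum_le_sum fun j _ => ?_
        rw [norm_mul]
        exact mul_le_mul (A.norm_entry_le_entrywise_sup_norm) (norm_le_pi_norm z j)
          (norm_nonneg _) (norm_nonneg _)
    _ = (n * ‖A‖) * ‖z‖ := by
        rw [Finset.sum_const, Finset.card_univ, Fintype.card_fin, nsmul_eq_mul]
        ring

/-- For odd `n ≥ 1`, there is no differentiable map
`C : ℝ → Matrix (Fin n) (Fin n) ℝ` satisfying `C' = C² + 1` on all of `ℝ`. -/
theorem stmt_4 (n : ℕ) (hn : 1 ≤ n) (hodd : Odd n) :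
    ¬ ∃ C : ℝ → Matrix (Fin n) (Fin n) ℝ,
        Differentiable ℝ C ∧ ∀ s : ℝ, deriv C s = C s ^ 2 + 1 := by
  rintro ⟨C, hC, hode⟩
  have hCd : ∀ s, HasDerivAt C (C s ^ 2 + 1) s := fun s => by
    have h := (hC s).hasDerivAt
    exact h.congr_deriv (hode s)
  -- eigenvalue of C 0
  obtain ⟨lam, hdet⟩ := aux_exists_eigen hodd (C 0)
  -- the angle θ
  set θ : ℝ := Real.pi / 2 - Real.arctan lam with hθdef
  have hθpos : 0 < θ := by
    have := Real.arctan_lt_pi_div_two lam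
    simp only [hθdef]
    linarith
  have hsinθ : Real.sin θ = Real.cos (Real.arctan lam) := Real.sin_pi_div_two_sub _
  have hcosθ : Real.cos θ = Real.sin (Real.arctan lam) := Real.cos_pi_div_two_sub _
  have hsinpos : 0 < Real.sin θ := by rw [hsinθ]; exact Real.cos_arctan_pos lam
  have hcs : Real.cos θ = lam * Real.sin θ := by
    rw [hcosθ, hsinθ, Real.sin_arctan, Real.cos_arctan]
    field_simp
  -- the singular matrix
  set A0 : Matrix (Fin n) (Fin n) ℝ := Real.cos θ • 1 - Real.sin θ • C 0 with hA0
  have hA0eq : A0 = (-Real.sin θ) • (C 0 - lam • (1 : Matrix (Fin n) (Fin n) ℝ)) := by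
    rw [hA0, smul_sub, smul_smul, hcs]
    module
  have hA0det : A0.det = 0 := by
    rw [hA0eq, Matrix.det_smul, hdet, mul_zero]
  obtain ⟨v, hv0, hAv⟩ := Matrix.exists_mulVec_eq_zero_iff.mpr hA0det
  -- the vector solution
  set y : ℝ → (Fin n → ℝ) :=
    fun s => Real.cos (s - θ) • v + Real.sin (s - θ) • (C s).mulVec v with hy
  have hy0 : y 0 = 0 := by
    have : y 0 = Real.cos θ • v - Real.sin θ • (C 0).mulVec v := by
      simp [hy, Real.cos_neg, Real.sin_neg, sub_eq_add_neg]
    rw [this, ← hAv, hA0]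
    rw [Matrix.sub_mulVec, Matrix.smul_mulVec, Matrix.smul_mulVec, Matrix.one_mulVec]
  have hyθ : y θ = v := by simp [hy]
  -- derivative of y
  -- linear map A ↦ A.mulVec v
  let L : Matrix (Fin n) (Fin n) ℝ →ₗ[ℝ] (Fin n → ℝ) :=
    { toFun := fun A => A.mulVec v
      map_add' := fun A B => Matrix.add_mulVec A B v
      map_smul' := fun c A => Matrix.smul_mulVec c A v }
  let Lc : Matrix (Fin n) (Fin n) ℝ →L[ℝ] (Fin n → ℝ) := LinearMap.toContinuousLinearMap L
  have hyd : ∀ s, HasDerivAt y ((C s).mulVec (y s)) s := by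
    intro s
    have hs : HasDerivAt (fun t : ℝ => t - θ) 1 s := (hasDerivAt_id s).sub_const θ
    have hcos : HasDerivAt (fun t : ℝ => Real.cos (t - θ)) (-Real.sin (s - θ) * 1) s :=
      HasDerivAt.comp (h₂ := Real.cos) s (Real.hasDerivAt_cos (s - θ)) hs
    have hsin : HasDerivAt (fun t : ℝ => Real.sin (t - θ)) (Real.cos (s - θ) * 1) s :=
      HasDerivAt.comp (h₂ := Real.sin) s (Real.hasDerivAt_sin (s - θ)) hs
    have h2 : HasDerivAt (fun t => (C t).mulVec v) ((C s ^ 2 + 1).mulVec v) s := by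
      have := Lc.hasFDerivAt.comp_hasDerivAt s (hCd s)
      exact this
    have hsum := (hcos.smul_const v).add (hsin.smul h2)
    refine hsum.congr_deriv ?_
    rw [hy]
    simp only [Matrix.mulVec_add, Matrix.mulVec_smul, Matrix.mulVec_mulVec,
      Matrix.add_mulVec, Matrix.one_mulVec, pow_two, smul_add, mul_one, neg_smul]
    abel
  have hycont : Continuous y := by
    have : Differentiable ℝ y := fun s => (hyd s).differentiableAt
    exact this.continuous
  -- uniform bound on C on [0, θ]
  obtain ⟨B, hB⟩ := (isCompact_Icc (a := (0:ℝ)) (b := θ)).exists_bound_of_continuousOn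
    hC.continuous.continuousOn
  have hBnn : (0 : ℝ) ≤ B := le_trans (norm_nonneg (C 0)) (hB 0 ⟨le_refl _, hθpos.le⟩)
  -- clamped vector field
  set proj : ℝ → ℝ := fun t => min (max t 0) θ with hproj
  have hprojmem : ∀ t, proj t ∈ Icc (0:ℝ) θ := fun t =>
    ⟨le_min (le_max_right t 0) hθpos.le, min_le_right _ _⟩
  have hprojeq : ∀ t ∈ Ico (0:ℝ) θ, proj t = t := by
    intro t ht
    rw [hproj]
    simp only
    rw [max_eq_left ht.1, min_eq_left ht.2.le]
  set vf : ℝ → (Fin n → ℝ) → (Fin n → ℝ) := fun t x => (C (proj t)).mulVec x with hvf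
  set K : NNReal := ⟨n * B, by positivity⟩ with hK
  have hlip : ∀ t, LipschitzWith K (vf t) := by
    intro t
    apply LipschitzWith.of_dist_le_mul
    intro x z
    rw [dist_eq_norm, dist_eq_norm, hvf]
    simp only
    rw [← Matrix.mulVec_sub]
    calc ‖(C (proj t)).mulVec (x - z)‖ ≤ (n * ‖C (proj t)‖) * ‖x - z‖ :=
          aux_norm_mulVec_le _ _
      _ ≤ (n * B) * ‖x - z‖ := by
          apply mul_le_mul_of_nonneg_right _ (norm_nonneg _)
          exact mul_le_mul_of_nonneg_left (hB _ (hprojmem t)) (by positivity)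
      _ = (K : ℝ) * ‖x - z‖ := rfl
  -- apply uniqueness
  have huniq : EqOn y (fun _ => (0 : Fin n → ℝ)) (Icc 0 θ) := by
    apply ODE_solution_unique (v := vf) hlip hycont.continuousOn
    · intro t ht
      have h := (hyd t).hasDerivWithinAt (s := Ici t)
      have : vf t (y t) = (C t).mulVec (y t) := by rw [hvf]; simp only; rw [hprojeq t ht]
      rwa [this]
    · exact continuousOn_const
    · intro t _
      have : vf t 0 = 0 := by rw [hvf]; simp only; rw [Matrix.mulVec_zero]
      rw [this]
      exact (hasDerivAt_const t (0 : Fin n → ℝ)).hasDerivWithinAt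
    · simpa using hy0
  have := huniq ⟨hθpos.le, le_refl θ⟩
  rw [hyθ] at this
  exact hv0 this
end

section
/- Every two-dimensional ℝ-linear subspace W of the space of 2×2 real matrices contains a nonzero matrix C having a real eigenvalue, i.e., a nonzero C ∈ W with (trace C)² − 4·det C ≥ 0. -/
/-- Every two-dimensional subspace of the 2×2 real matrices contains a nonzero
matrix with a real eigenvalue, i.e. with nonnegative discriminant
`(tr C)² − 4 det C ≥ 0`. -/
theorem stmt_5 (W : Submodule ℝ (Matrix (Fin 2) (Fin 2) ℝ))
    (hW : Module.finrank ℝ W = 2) :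
    ∃ C ∈ W, C ≠ 0 ∧ (Matrix.trace C) ^ 2 - 4 * Matrix.det C ≥ 0 := by
  -- Consider the linear functional `C ↦ C 0 1` on `W`.
  let f : W →ₗ[ℝ] ℝ :=
    { toFun := fun C => (C : Matrix (Fin 2) (Fin 2) ℝ) 0 1
      map_add' := fun x y => rfl
      map_smul' := fun c x => rfl }
  have hnotinj : ¬ Function.Injective f := by
    intro hinj
    have := LinearMap.finrank_le_finrank_of_injective hinj
    simp [hW, Module.finrank_self] at this
  rw [injective_iff_map_eq_zero] at hnotinj
  push_neg at hnotinj
  obtain ⟨x, hx0, hxne⟩ := hnotinj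
  refine ⟨(x : Matrix (Fin 2) (Fin 2) ℝ), x.2, ?_, ?_⟩
  · intro h
    exact hxne (Subtype.ext h)
  · have hb : (x : Matrix (Fin 2) (Fin 2) ℝ) 0 1 = 0 := hx0
    rw [Matrix.trace_fin_two, Matrix.det_fin_two, hb]
    nlinarith [sq_nonneg ((x : Matrix (Fin 2) (Fin 2) ℝ) 0 0 - (x : Matrix (Fin 2) (Fin 2) ℝ) 1 1)]
end

section
/- Let n ≥ 1 and let φ : EuclideanSpace ℝ (Fin n) → ℝ be a twice continuously differentiable function that is bounded from above. Then for every j ≥ 1 there exists a point x_j with φ(x_j) > sup φ − 1/j, ‖∇φ(x_j)‖ ≤ 1/j, and Δφ(x_j) ≤ 1/j. -/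
open Set Filter Topology InnerProductSpace

/-- 1D second derivative test at a local max. -/
lemma my_secondDeriv_nonpos {f : ℝ → ℝ} (hf : ContDiff ℝ 2 f)
    (hmax : IsLocalMax f 0) : deriv (deriv f) 0 ≤ 0 := by
  by_contra hc
  push_neg at hc
  have hd1 : Differentiable ℝ f := hf.differentiable two_ne_zero
  have hdf : ContDiff ℝ 1 (deriv f) := by
    have := ContDiff.iterate_deriv' 1 1 (f := f) (by exact_mod_cast hf)
    simpa using this
  have h0 : deriv f 0 = 0 := hmax.deriv_eq_zero
  have hder : HasDerivAt (deriv f) (deriv (deriv f) 0) 0 :=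
    ((hdf.differentiable one_ne_zero) 0).hasDerivAt
  have hslope : Tendsto (slope (deriv f) 0) (𝓝[≠] 0) (𝓝 (deriv (deriv f) 0)) :=
    hasDerivAt_iff_tendsto_slope.mp hder
  have hev : ∀ᶠ t in 𝓝[≠] (0:ℝ), 0 < slope (deriv f) 0 t :=
    hslope.eventually (eventually_gt_nhds hc)
  have hev' : ∀ᶠ t in 𝓝[>] (0:ℝ), 0 < slope (deriv f) 0 t :=
    hev.filter_mono (nhdsWithin_mono 0 (fun x hx => ne_of_gt hx))
  obtain ⟨b, hb, hsub⟩ := mem_nhdsGT_iff_exists_Ioo_subset.mp hev'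
  have hbpos : (0:ℝ) < b := hb
  have hpos : ∀ t ∈ Ioo (0:ℝ) b, 0 < deriv f t := by
    intro t ht
    have h' := hsub ht
    rw [mem_setOf_eq, slope_def_field] at h'
    have h'' : 0 < (deriv f t - 0) / (t - 0) := by rwa [h0] at h'
    rcases div_pos_iff.mp h'' with ⟨h1, _⟩ | ⟨_, h2⟩
    · linarith
    · linarith [ht.1]
  have hmono : StrictMonoOn f (Icc 0 b) := by
    apply strictMonoOn_of_deriv_pos (convex_Icc 0 b) hd1.continuous.continuousOn
    intro t ht
    rw [interior_Icc] at ht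
    exact hpos t ht
  have ev1 : ∀ᶠ t in 𝓝[>] (0:ℝ), f t ≤ f 0 := hmax.filter_mono nhdsWithin_le_nhds
  have ev2 : ∀ᶠ t in 𝓝[>] (0:ℝ), t ∈ Ioo (0:ℝ) b :=
    Ioo_mem_nhdsGT_of_mem (Set.mem_Ico.mpr ⟨le_refl (0:ℝ), hbpos⟩)
  obtain ⟨t, ht, hle⟩ := (ev2.and ev1).exists
  have : f 0 < f t := hmono ⟨le_refl 0, hbpos.le⟩ ⟨ht.1.le, ht.2.le⟩ ht.1
  linarith

/-- At a global max of `φ - ε‖·-x₀‖²`, the second directional derivative of `φ`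
is at most `2ε‖v‖²`. -/
lemma my_dir_second {E : Type*} [NormedAddCommGroup E] [InnerProductSpace ℝ E]
    {φ : E → ℝ} (hφ : ContDiff ℝ 2 φ) {ε : ℝ} {x₀ x : E}
    (hmax : ∀ y, φ y - ε * ‖y - x₀‖ ^ 2 ≤ φ x - ε * ‖x - x₀‖ ^ 2) (v : E) :
    fderiv ℝ (fderiv ℝ φ) x v v ≤ 2 * ε * ‖v‖ ^ 2 := by
  set L : ℝ → E := fun t => x + t • v with hLdef
  have hLd : ∀ t : ℝ, HasDerivAt L v t := fun t => by
    have := ((hasDerivAt_id' t).smul_const v).const_add x; rw [one_smul] at this; exact this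
  have hLC : ContDiff ℝ 2 L := contDiff_const.add (contDiff_id.smul contDiff_const)
  set u : ℝ → ℝ := fun t => φ (L t) with hudef
  set r : ℝ → ℝ := fun t => ‖L t - x₀‖ ^ 2 with hrdef
  set w : ℝ → ℝ := fun t => u t - ε * r t with hwdef
  set A : ℝ := ‖x - x₀‖ ^ 2
  set B : ℝ := 2 * inner ℝ (x - x₀) v
  set C : ℝ := ‖v‖ ^ 2
  have hrform : ∀ t, r t = A + B * t + C * t ^ 2 := by
    intro t
    have : L t - x₀ = (x - x₀) + t • v := by simp [hLdef]; abel
    rw [hrdef]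
    simp only [this, norm_add_sq_real, real_inner_smul_right, norm_smul]
    simp [A, B, C, mul_pow, Real.norm_eq_abs, sq_abs]
    ring
  have hu2 : ContDiff ℝ 2 u := hφ.comp hLC
  have hr2 : ContDiff ℝ 2 r := by
    rw [hrdef]
    exact (contDiff_norm_sq ℝ).comp (hLC.sub contDiff_const)
  have hw2 : ContDiff ℝ 2 w := hu2.sub (contDiff_const.mul hr2)
  have hL0 : L 0 = x := by simp [hLdef]
  have hwmax : IsLocalMax w 0 := by
    apply Filter.Eventually.of_forall
    intro t
    have h1 := hmax (L t)
    simp only [hwdef, hudef, hrdef, hL0]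
    convert h1 using 2 <;> simp [hL0]
  have hkey := my_secondDeriv_nonpos hw2 hwmax
  -- derivative of u
  have hφd : Differentiable ℝ φ := hφ.differentiable two_ne_zero
  have hu' : ∀ t, HasDerivAt u (fderiv ℝ φ (L t) v) t := fun t =>
    (hφd (L t)).hasFDerivAt.comp_hasDerivAt t (hLd t)
  -- derivative of r
  have hr' : ∀ t, HasDerivAt r (B + 2 * C * t) t := by
    intro t
    have h1 : HasDerivAt (fun t : ℝ => A + B * t + C * t ^ 2) (B + 2 * C * t) t := by
      have hA : HasDerivAt (fun t : ℝ => A + B * t) B t := by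
        simpa using ((hasDerivAt_id t).const_mul B).const_add A
      have hC : HasDerivAt (fun t : ℝ => C * t ^ 2) (C * (2 * t)) t := by
        simpa using (hasDerivAt_pow 2 t).const_mul C
      exact (hA.add hC).congr_deriv (by ring)
    exact h1.congr_of_eventuallyEq (Filter.Eventually.of_forall fun s => hrform s)
  have hw' : ∀ t, HasDerivAt w (fderiv ℝ φ (L t) v - ε * (B + 2 * C * t)) t := fun t =>
    (hu' t).sub ((hr' t).const_mul ε)
  have hderivw : deriv w = fun t => fderiv ℝ φ (L t) v - ε * (B + 2 * C * t) :=
    funext fun t => (hw' t).deriv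
  -- second derivative of w at 0
  have hDφ : Differentiable ℝ (fderiv ℝ φ) :=
    (hφ.fderiv_right (m := 1) (by norm_num)).differentiable one_ne_zero
  have hchain : HasDerivAt (fun t : ℝ => fderiv ℝ φ (L t)) (fderiv ℝ (fderiv ℝ φ) x v) 0 := by
    have h1 : HasFDerivAt (fderiv ℝ φ) (fderiv ℝ (fderiv ℝ φ) x) (L 0) := by
      rw [hL0]; exact (hDφ x).hasFDerivAt
    exact h1.comp_hasDerivAt 0 (hLd 0)
  have happ : HasDerivAt (fun t : ℝ => fderiv ℝ φ (L t) v)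
      (fderiv ℝ (fderiv ℝ φ) x v v) 0 := by
    exact (ContinuousLinearMap.apply ℝ ℝ v).hasFDerivAt.comp_hasDerivAt 0 hchain
  have hlin : HasDerivAt (fun t : ℝ => ε * (B + 2 * C * t)) (ε * (2 * C)) 0 := by
    have : HasDerivAt (fun t : ℝ => B + 2 * C * t) (2 * C) 0 := by
      simpa using ((hasDerivAt_id (0:ℝ)).const_mul (2 * C)).const_add B
    simpa using this.const_mul ε
  have hw'' : HasDerivAt (deriv w) (fderiv ℝ (fderiv ℝ φ) x v v - ε * (2 * C)) 0 := by
    rw [hderivw]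
    exact happ.sub hlin
  rw [hw''.deriv] at hkey
  have : (0:ℝ) ≤ C := sq_nonneg _
  simp only [C] at *
  linarith

/-- The Laplacian of a function on Euclidean space: the trace of its second
derivative, i.e. the sum of the second derivatives along the standard
orthonormal basis directions. -/
noncomputable def laplacian {n : ℕ} (f : EuclideanSpace ℝ (Fin n) → ℝ)
    (x : EuclideanSpace ℝ (Fin n)) : ℝ :=
  ∑ i, iteratedFDeriv ℝ 2 f x ![EuclideanSpace.single i 1, EuclideanSpace.single i 1]

set_option maxHeartbeats 1000000 in
/-- The Omori–Yau maximum principle on Euclidean space: for a `C²` function `φ`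
bounded from above there are points almost realizing the supremum at which the
gradient is small and the Laplacian is almost nonpositive. -/
theorem stmt_8 (n : ℕ) (hn : 1 ≤ n) (φ : EuclideanSpace ℝ (Fin n) → ℝ)
    (hφ : ContDiff ℝ 2 φ) (hb : BddAbove (Set.range φ)) :
    ∀ j : ℕ, 1 ≤ j → ∃ x : EuclideanSpace ℝ (Fin n),
      φ x > sSup (Set.range φ) - 1 / (j : ℝ) ∧
      ‖gradient φ x‖ ≤ 1 / (j : ℝ) ∧ laplacian φ x ≤ 1 / (j : ℝ) := by
  intro j hj
  have hj1 : (1:ℝ) ≤ (j:ℝ) := by exact_mod_cast hj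
  have hn1 : (1:ℝ) ≤ (n:ℝ) := by exact_mod_cast hn
  set δ : ℝ := 1 / (j:ℝ) with hδdef
  have hδ : 0 < δ := by positivity
  set ε : ℝ := δ / (4 * n) with hεdef
  have hε : 0 < ε := by positivity
  set S := sSup (Set.range φ) with hSdef
  have hSb : ∀ y, φ y ≤ S := fun y => le_csSup hb ⟨y, rfl⟩
  have hRne : (Set.range φ).Nonempty := ⟨φ 0, Set.mem_range_self 0⟩
  obtain ⟨_, ⟨x₀, rfl⟩, hx₀⟩ := exists_lt_of_lt_csSup hRne (show S - δ/2 < S by linarith)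
  set g : EuclideanSpace ℝ (Fin n) → ℝ := fun y => φ y - ε * ‖y - x₀‖ ^ 2 with hgdef
  have hq2 : ContDiff ℝ 2 (fun y : EuclideanSpace ℝ (Fin n) => ‖y - x₀‖ ^ 2) :=
    (contDiff_norm_sq ℝ).comp (contDiff_id.sub contDiff_const)
  have hg2 : ContDiff ℝ 2 g := hφ.sub (contDiff_const.mul hq2)
  -- maximum on the closed ball of radius 2n
  obtain ⟨x, hxK, hxmax⟩ := (isCompact_closedBall x₀ (2*n)).exists_isMaxOn
    ⟨x₀, Metric.mem_closedBall_self (by positivity)⟩ hg2.continuous.continuousOn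
  have hdistx : ‖x - x₀‖ ≤ 2*n := by
    have := hxK
    rwa [Metric.mem_closedBall, dist_eq_norm] at this
  have hgx₀ : g x₀ = φ x₀ := by simp [hgdef]
  have hglob : ∀ y, g y ≤ g x := by
    intro y
    by_cases hy : y ∈ Metric.closedBall x₀ (2*n)
    · exact hxmax hy
    · have h1 : (2*(n:ℝ)) < ‖y - x₀‖ := by
        rw [Metric.mem_closedBall, dist_eq_norm, not_le] at hy
        exact hy
      have h2 : ε * (2*(n:ℝ))^2 ≤ ε * ‖y - x₀‖^2 := by
        have h1sq : (2*(n:ℝ))^2 ≤ ‖y - x₀‖^2 := by nlinarith [norm_nonneg (y - x₀)]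
        exact mul_le_mul_of_nonneg_left h1sq hε.le
      have h3 : ε * (2*(n:ℝ))^2 = n * δ := by
        rw [hεdef]
        field_simp
        ring
      have h4 : g x₀ ≤ g x := hxmax (Metric.mem_closedBall_self (by positivity))
      have h5 : g y ≤ S - n * δ := by
        have := hSb y
        simp only [hgdef]
        nlinarith
      have h6 : δ ≤ n * δ := by nlinarith
      rw [hgx₀] at h4
      linarith
  -- the point x works
  refine ⟨x, ?_, ?_, ?_⟩
  · -- value bound
    have h1 : g x₀ ≤ g x := hglob x₀
    rw [hgx₀] at h1
    have h2 : g x ≤ φ x := by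
      simp only [hgdef]
      nlinarith [sq_nonneg ‖x - x₀‖, norm_nonneg (x - x₀)]
    linarith
  · -- gradient bound
    have hqd : HasFDerivAt (fun y : EuclideanSpace ℝ (Fin n) => ‖y - x₀‖ ^ 2)
        (2 • (innerSL ℝ (x - x₀))) x := by
      simpa using ((hasFDerivAt_id x).sub_const x₀).norm_sq
    have hφdx : HasFDerivAt φ (fderiv ℝ φ x) x :=
      (hφ.differentiable two_ne_zero x).hasFDerivAt
    have hgd : HasFDerivAt g (fderiv ℝ φ x - ε • (2 • (innerSL ℝ (x - x₀)))) x :=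
      hφdx.sub (hqd.const_smul ε)
    have hloc : IsLocalMax g x := Filter.Eventually.of_forall hglob
    have hzero := hloc.hasFDerivAt_eq_zero hgd
    have hfd : fderiv ℝ φ x = ε • (2 • (innerSL ℝ (x - x₀))) := by
      rwa [sub_eq_zero] at hzero
    have htoD : (toDual ℝ (EuclideanSpace ℝ (Fin n))) ((2*ε) • (x - x₀))
        = ε • (2 • (innerSL ℝ (x - x₀))) := by
      ext y
      simp only [toDual_apply_apply, ContinuousLinearMap.smul_apply, innerSL_apply_apply,
        real_inner_smul_left, smul_eq_mul, nsmul_eq_mul]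
      ring
    have hgradAt : HasGradientAt φ ((2*ε) • (x - x₀)) x := by
      rw [hasGradientAt_iff_hasFDerivAt, htoD, ← hfd]
      exact hφdx
    rw [hgradAt.gradient, norm_smul, Real.norm_eq_abs, abs_of_pos (show (0:ℝ) < 2*ε by positivity)]
    calc (2*ε) * ‖x - x₀‖ ≤ (2*ε) * (2*n) := by nlinarith
      _ = δ := by rw [hεdef]; field_simp; ring
  · -- Laplacian bound
    have hdir := fun v => my_dir_second hφ (fun y => hglob y) v
    have hsum : laplacian φ x ≤ ∑ _i : Fin n, 2 * ε * 1 := by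
      rw [laplacian]
      apply Finset.sum_le_sum
      intro i _
      rw [iteratedFDeriv_two_apply]
      have h1 : ‖(EuclideanSpace.single i (1:ℝ))‖ = 1 := by
        simp [EuclideanSpace.norm_single]
      have := hdir (EuclideanSpace.single i (1:ℝ))
      rw [h1] at this
      simpa using this
    have h2 : ∑ _i : Fin n, 2 * ε * 1 = 2 * ε * n := by
      simp [Finset.sum_const, mul_comm]
    rw [h2] at hsum
    have h3 : 2 * ε * n = δ / 2 := by rw [hεdef]; field_simp; ring
    rw [h3] at hsum
    linarith
end

section
/- Let n ≥ 1 and let φ : EuclideanSpace ℝ (Fin n) → ℝ be a twice continuously differentiable function satisfying Δφ(x) ≥ 2(φ(x))² for every x. Then φ(x) ≤ 0 for every x and sup φ = 0 (i.e., the supremum of the range of φ equals 0). In particular, if φ(x) ≥ 0 for every x, then φ is identically zero. -/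
set_option maxHeartbeats 1000000

open Filter Topology Set Metric

variable {E : Type*} [NormedAddCommGroup E] [NormedSpace ℝ E]

theorem line_hasDerivAt (f : E → ℝ) (hf : Differentiable ℝ f) (x v : E) (t : ℝ) :
    HasDerivAt (fun s : ℝ => f (x + s • v)) (fderiv ℝ f (x + t • v) v) t := by
  have hL : HasDerivAt (fun s : ℝ => x + s • v) v t := by
    simpa using ((hasDerivAt_id t).smul_const v).const_add x
  simpa [Function.comp_def] using ((hf (x + t • v)).hasFDerivAt).comp_hasDerivAt t hL

theorem line_deriv_eq (f : E → ℝ) (hf : ContDiff ℝ 2 f) (x v : E) :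
    deriv (fun s : ℝ => f (x + s • v)) = fun s : ℝ => fderiv ℝ f (x + s • v) v :=
  funext fun t => (line_hasDerivAt f (hf.differentiable (by norm_num)) x v t).deriv

theorem line_deriv2_hasDerivAt (f : E → ℝ) (hf : ContDiff ℝ 2 f) (x v : E) :
    HasDerivAt (fun s : ℝ => fderiv ℝ f (x + s • v) v) (fderiv ℝ (fderiv ℝ f) x v v) 0 := by
  have hff : Differentiable ℝ (fderiv ℝ f) :=
    (hf.fderiv_right (m := 1) (by norm_num)).differentiable (by norm_num)
  have hL : HasDerivAt (fun s : ℝ => x + s • v) v 0 := by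
    simpa using ((hasDerivAt_id (0:ℝ)).smul_const v).const_add x
  have h2 : HasDerivAt (fun s : ℝ => fderiv ℝ f (x + s • v)) (fderiv ℝ (fderiv ℝ f) x v) 0 := by
    simpa [Function.comp_def] using ((hff (x + (0:ℝ) • v)).hasFDerivAt).comp_hasDerivAt 0 hL
  simpa [Function.comp_def] using ((ContinuousLinearMap.apply ℝ ℝ v).hasFDerivAt.comp_hasDerivAt 0 h2)

theorem bridge (f : E → ℝ) (hf : ContDiff ℝ 2 f) (x v : E) :
    iteratedFDeriv ℝ 2 f x ![v, v] = deriv (deriv (fun s : ℝ => f (x + s • v))) 0 := by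
  rw [line_deriv_eq f hf x v, iteratedFDeriv_two_apply]
  simp [(line_deriv2_hasDerivAt f hf x v).deriv]

theorem second_deriv_test {g : ℝ → ℝ} {a : ℝ}
    (hg : ∀ᶠ t in 𝓝 a, DifferentiableAt ℝ g t)
    (hg2 : DifferentiableAt ℝ (deriv g) a)
    (hmax : IsLocalMax g a) : deriv (deriv g) a ≤ 0 := by
  by_contra hpos
  push_neg at hpos
  have hda : deriv g a = 0 := hmax.deriv_eq_zero
  have hslope : Tendsto (slope (deriv g) a) (𝓝[≠] a) (𝓝 (deriv (deriv g) a)) :=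
    hasDerivAt_iff_tendsto_slope.1 hg2.hasDerivAt
  have hev : ∀ᶠ t in 𝓝[>] a, 0 < slope (deriv g) a t := by
    have : ∀ᶠ t in 𝓝[≠] a, 0 < slope (deriv g) a t :=
      hslope.eventually (eventually_gt_nhds hpos)
    exact this.filter_mono (nhdsWithin_mono a fun t ht => ne_of_gt ht)
  have hev2 : ∀ᶠ t in 𝓝[>] a, 0 < deriv g t := by
    filter_upwards [hev, self_mem_nhdsWithin] with t ht ht'
    rw [slope_def_field, hda, sub_zero, div_pos_iff] at ht
    rcases ht with ⟨h1, _⟩ | ⟨_, h2⟩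
    · exact h1
    · linarith [mem_Ioi.1 ht']
  obtain ⟨r, hr, hball⟩ := Metric.eventually_nhds_iff_ball.1 (hg.and hmax)
  obtain ⟨b, hb, hIoc⟩ := mem_nhdsGT_iff_exists_Ioc_subset.1 hev2
  set c := min b (a + r / 2) with hc
  have hca : a < c := lt_min hb (by linarith)
  have hsub : Icc a c ⊆ Metric.ball a r := by
    intro t ht
    rw [Metric.mem_ball, Real.dist_eq, abs_lt]
    constructor <;> [linarith [ht.1]; linarith [ht.2, min_le_right b (a + r/2)]]
  have hmono : StrictMonoOn g (Icc a c) := by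
    apply strictMonoOn_of_deriv_pos (convex_Icc a c)
    · intro t ht
      exact ((hball t (hsub ht)).1).continuousAt.continuousWithinAt
    · intro t ht
      rw [interior_Icc] at ht
      exact hIoc ⟨ht.1, le_trans ht.2.le (min_le_left _ _)⟩
  have h1 : g a < g c := hmono (left_mem_Icc.2 hca.le) (right_mem_Icc.2 hca.le) hca
  have h2 : g c ≤ g a := (hball c (hsub (right_mem_Icc.2 hca.le))).2
  linarith

theorem second_test_sub {f g : ℝ → ℝ}
    (hf_ev : ∀ᶠ t in 𝓝 (0:ℝ), DifferentiableAt ℝ f t)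
    (hg_ev : ∀ᶠ t in 𝓝 (0:ℝ), DifferentiableAt ℝ g t)
    (hf2 : DifferentiableAt ℝ (deriv f) 0)
    (hg2 : DifferentiableAt ℝ (deriv g) 0)
    (hmax : IsLocalMax (fun t => f t - g t) 0) :
    deriv (deriv f) 0 ≤ deriv (deriv g) 0 := by
  have h1 : deriv (fun t => f t - g t) =ᶠ[𝓝 (0:ℝ)] fun t => deriv f t - deriv g t := by
    filter_upwards [hf_ev, hg_ev] with t h1 h2
    exact deriv_sub h1 h2
  have hd2 : DifferentiableAt ℝ (deriv (fun t => f t - g t)) 0 :=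
    (h1.differentiableAt_iff).2 (hf2.sub hg2)
  have hev : ∀ᶠ t in 𝓝 (0:ℝ), DifferentiableAt ℝ (fun t => f t - g t) t := by
    filter_upwards [hf_ev, hg_ev] with t h1 h2
    exact h1.sub h2
  have h := second_deriv_test hev hd2 hmax
  rw [h1.deriv_eq, deriv_fun_sub hf2 hg2] at h
  linarith

theorem s_hasDeriv (b c t : ℝ) : HasDerivAt (fun t : ℝ => b + c*t + t^2) (c + 2*t) t := by
  have h1 : HasDerivAt (fun t : ℝ => c * t) (c * 1) t := (hasDerivAt_id t).const_mul c
  have h2 : HasDerivAt (fun t : ℝ => t^2) (2 * t^1) t := hasDerivAt_pow 2 t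
  simpa [Pi.add_def] using (h1.const_add b).add h2

theorem W_hasDeriv (a R b c t : ℝ) (h : R^2 - (b + c*t + t^2) ≠ 0) :
    HasDerivAt (fun t : ℝ => a * (((R^2 - (b + c*t + t^2))^2)⁻¹))
      (2*a*(c + 2*t) * (((R^2 - (b + c*t + t^2))^3)⁻¹)) t := by
  have hu : HasDerivAt (fun t : ℝ => R^2 - (b + c*t + t^2)) (-(c + 2*t)) t := by
    simpa using (s_hasDeriv b c t).const_sub (R^2)
  have hu2 := (hu.pow 2).inv (pow_ne_zero 2 h)
  have := hu2.const_mul a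
  refine this.congr_deriv ?_
  simp only [Pi.pow_apply]
  field_simp
  ring

theorem D_hasDeriv (a R b c t : ℝ) (h : R^2 - (b + c*t + t^2) ≠ 0) :
    HasDerivAt (fun t : ℝ => 2*a*(c + 2*t) * (((R^2 - (b + c*t + t^2))^3)⁻¹))
      (4*a*((R^2 - (b + c*t + t^2))^3)⁻¹
        + 6*a*(c+2*t)^2*((R^2 - (b + c*t + t^2))^4)⁻¹) t := by
  have hu : HasDerivAt (fun t : ℝ => R^2 - (b + c*t + t^2)) (-(c + 2*t)) t := by
    simpa using (s_hasDeriv b c t).const_sub (R^2)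
  have hu3 := (hu.pow 3).inv (pow_ne_zero 3 h)
  have hA : HasDerivAt (fun t : ℝ => 2*a*(c + 2*t)) (2*a*2) t := by
    have : HasDerivAt (fun t : ℝ => c + 2*t) (2*1) t := ((hasDerivAt_id t).const_mul 2).const_add c
    simpa using this.const_mul (2*a)
  have := hA.mul hu3
  refine this.congr_deriv ?_
  simp only [Pi.pow_apply, Pi.inv_apply]
  field_simp
  ring

theorem W_second (a R b c : ℝ) (hb : b < R^2) :
    (∀ᶠ t in 𝓝 (0:ℝ), DifferentiableAt ℝ
        (fun t : ℝ => a * (((R^2 - (b + c*t + t^2))^2)⁻¹)) t)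
    ∧ DifferentiableAt ℝ (deriv (fun t : ℝ => a * (((R^2 - (b + c*t + t^2))^2)⁻¹))) 0
    ∧ deriv (deriv (fun t : ℝ => a * (((R^2 - (b + c*t + t^2))^2)⁻¹))) 0
        = 4*a*((R^2-b)^3)⁻¹ + 6*a*c^2*((R^2-b)^4)⁻¹ := by
  have hcont : ContinuousAt (fun t : ℝ => R^2 - (b + c*t + t^2)) 0 := by fun_prop
  have h0 : R^2 - (b + c*(0:ℝ) + (0:ℝ)^2) ≠ 0 := by
    norm_num
    intro h; nlinarith
  have hev : ∀ᶠ t in 𝓝 (0:ℝ), R^2 - (b + c*t + t^2) ≠ 0 := hcont.eventually_ne (by simpa using h0)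
  have hDeq : deriv (fun t : ℝ => a * (((R^2 - (b + c*t + t^2))^2)⁻¹))
      =ᶠ[𝓝 (0:ℝ)] fun t => 2*a*(c + 2*t) * (((R^2 - (b + c*t + t^2))^3)⁻¹) := by
    filter_upwards [hev] with t ht
    exact (W_hasDeriv a R b c t ht).deriv
  have hD0 := D_hasDeriv a R b c 0 h0
  refine ⟨?_, ?_, ?_⟩
  · filter_upwards [hev] with t ht
    exact (W_hasDeriv a R b c t ht).differentiableAt
  · exact (hDeq.differentiableAt_iff).2 hD0.differentiableAt
  · rw [hDeq.deriv_eq, hD0.deriv]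
    norm_num

theorem Q_second (K b c : ℝ) :
    (∀ᶠ t in 𝓝 (0:ℝ), DifferentiableAt ℝ (fun t : ℝ => K * (b + c*t + t^2)) t)
    ∧ DifferentiableAt ℝ (deriv (fun t : ℝ => K * (b + c*t + t^2))) 0
    ∧ deriv (deriv (fun t : ℝ => K * (b + c*t + t^2))) 0 = 2*K := by
  have hd : ∀ t : ℝ, HasDerivAt (fun t : ℝ => K * (b + c*t + t^2)) (K * (c + 2*t)) t :=
    fun t => (s_hasDeriv b c t).const_mul K
  have hDeq : deriv (fun t : ℝ => K * (b + c*t + t^2)) = fun t => K * (c + 2*t) :=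
    funext fun t => (hd t).deriv
  have hd2 : ∀ t : ℝ, HasDerivAt (fun t : ℝ => K * (c + 2*t)) (K * 2) t := by
    intro t
    have : HasDerivAt (fun t : ℝ => c + 2*t) (2*1) t := ((hasDerivAt_id t).const_mul 2).const_add c
    simpa using this.const_mul K
  refine ⟨Eventually.of_forall fun t => (hd t).differentiableAt, ?_, ?_⟩
  · rw [hDeq]; exact (hd2 0).differentiableAt
  · rw [hDeq, (hd2 0).deriv]; ring

theorem line_normsq {n : ℕ} (p : EuclideanSpace ℝ (Fin n)) (i : Fin n) (t : ℝ) :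
    ‖p + t • EuclideanSpace.single i (1:ℝ)‖^2 = ‖p‖^2 + (2 * p i) * t + t^2 := by
  rw [norm_add_sq_real, real_inner_smul_right, norm_smul]
  have h1 : (inner ℝ p (EuclideanSpace.single i (1:ℝ)) : ℝ) = p i := by
    rw [EuclideanSpace.inner_single_right]; simp
  rw [h1, EuclideanSpace.norm_single]
  simp [mul_pow]; ring

theorem normsq_eq_sum {n : ℕ} (p : EuclideanSpace ℝ (Fin n)) :
    ‖p‖^2 = ∑ i, (p i)^2 := by
  rw [EuclideanSpace.norm_eq, Real.sq_sqrt]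
  · simp [sq_abs]
  · positivity

theorem lap_le {n : ℕ} (φ : EuclideanSpace ℝ (Fin n) → ℝ) (hφ : ContDiff ℝ 2 φ)
    (p : EuclideanSpace ℝ (Fin n)) (B : Fin n → ℝ → ℝ) (d2 : Fin n → ℝ)
    (hBev : ∀ i, ∀ᶠ t in 𝓝 (0:ℝ), DifferentiableAt ℝ (B i) t)
    (hB2 : ∀ i, DifferentiableAt ℝ (deriv (B i)) 0)
    (hBval : ∀ i, deriv (deriv (B i)) 0 = d2 i)
    (hmax : ∀ i, IsLocalMax
      (fun t : ℝ => φ (p + t • EuclideanSpace.single i (1:ℝ)) - B i t) 0) :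
    laplacian φ p ≤ ∑ i, d2 i := by
  unfold laplacian
  apply Finset.sum_le_sum
  intro i _
  have hb := bridge φ hφ p (EuclideanSpace.single i (1:ℝ))
  rw [show ![EuclideanSpace.single i (1:ℝ), EuclideanSpace.single i 1]
      = ![EuclideanSpace.single i (1:ℝ), EuclideanSpace.single i (1:ℝ)] from rfl, hb]
  rw [← hBval i]
  set v := EuclideanSpace.single i (1:ℝ)
  have hdiff : Differentiable ℝ φ := hφ.differentiable (by norm_num)
  apply second_test_sub _ (hBev i) _ (hB2 i) (hmax i)
  · exact Eventually.of_forall fun t =>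
      (hdiff.comp ((differentiable_const p).add (differentiable_id.smul_const v))).differentiableAt
  · rw [line_deriv_eq φ hφ p v]
    exact (line_deriv2_hasDerivAt φ hφ p v).differentiableAt

theorem core1 {n : ℕ} (φ : EuclideanSpace ℝ (Fin n) → ℝ) (hφ : ContDiff ℝ 2 φ)
    (hineq : ∀ x, 2 * (φ x) ^ 2 ≤ laplacian φ x) (x₀ : EuclideanSpace ℝ (Fin n))
    (R : ℝ) (hR : ‖x₀‖ < R) :
    φ x₀ ≤ ((2*n+12)*R^2) * (((R^2 - ‖x₀‖^2)^2)⁻¹) := by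
  set a : ℝ := (2*n+12)*R^2 with ha
  set W : EuclideanSpace ℝ (Fin n) → ℝ := fun x => a * (((R^2 - ‖x‖^2)^2)⁻¹) with hW
  by_contra hcon
  push_neg at hcon
  have hR0 : 0 < R := lt_of_le_of_lt (norm_nonneg _) hR
  have hx₀sq : ‖x₀‖^2 < R^2 := by nlinarith [norm_nonneg x₀]
  have hapos : 0 < a := by positivity
  -- max of φ on big ball
  obtain ⟨pM, hpMmem, hpM⟩ := (isCompact_closedBall (0:EuclideanSpace ℝ (Fin n)) R).exists_isMaxOn
    ⟨0, by simpa using hR0.le⟩ hφ.continuous.continuousOn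
  set B₀ : ℝ := max (φ pM) 1 with hB₀
  have hB₀pos : 0 < B₀ := lt_of_lt_of_le one_pos (le_max_right _ _)
  set m : ℝ := min (Real.sqrt (a / B₀)) (R^2 - ‖x₀‖^2) with hm
  have hmpos : 0 < m := lt_min (Real.sqrt_pos.2 (by positivity)) (by linarith)
  have hmle : m ≤ R^2 - ‖x₀‖^2 := min_le_right _ _
  have hm2 : m^2 ≤ a / B₀ := by
    have h1 : m ≤ Real.sqrt (a / B₀) := min_le_left _ _
    calc m^2 ≤ (Real.sqrt (a / B₀))^2 := by nlinarith [Real.sqrt_nonneg (a / B₀)]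
    _ = a / B₀ := Real.sq_sqrt (by positivity)
  set ρ : ℝ := Real.sqrt (R^2 - m) with hρ
  have hρ2 : ρ^2 = R^2 - m := Real.sq_sqrt (by nlinarith [norm_nonneg x₀])
  have hx₀ρ : ‖x₀‖ ≤ ρ := by
    rw [hρ, show ‖x₀‖ = Real.sqrt (‖x₀‖^2) from (Real.sqrt_sq (norm_nonneg _)).symm]
    exact Real.sqrt_le_sqrt (by linarith)
  have hρ0 : 0 ≤ ρ := le_trans (norm_nonneg _) hx₀ρ
  have hρR : ρ < R := by
    nlinarith [hρ2, hmpos, hρ0, hR0]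
  -- continuity of F on closedBall 0 ρ
  have hne : ∀ x ∈ closedBall (0:EuclideanSpace ℝ (Fin n)) ρ, ((R^2 - ‖x‖^2)^2) ≠ 0 := by
    intro x hx
    rw [mem_closedBall_zero_iff] at hx
    have : ‖x‖^2 ≤ ρ^2 := by nlinarith [norm_nonneg x]
    have h3 : ‖x‖^2 < R^2 := by nlinarith
    exact pow_ne_zero 2 (by linarith : R^2 - ‖x‖^2 ≠ 0)
  have hWc : ContinuousOn W (closedBall (0:EuclideanSpace ℝ (Fin n)) ρ) := by
    apply continuousOn_const.mul (ContinuousOn.inv₀ (by fun_prop) hne)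
  obtain ⟨p, hpmem, hp⟩ := (isCompact_closedBall (0:EuclideanSpace ℝ (Fin n)) ρ).exists_isMaxOn
    ⟨x₀, mem_closedBall_zero_iff.2 hx₀ρ⟩ ((hφ.continuous.continuousOn).sub hWc)
  have hFx₀p : φ x₀ - W x₀ ≤ φ p - W p := hp (mem_closedBall_zero_iff.2 hx₀ρ)
  have hFp0 : 0 < φ p - W p := by
    have : 0 < φ x₀ - W x₀ := by simp only [hW]; linarith
    linarith
  have hpρball : ‖p‖ < ρ := by
    by_contra hcon2
    push_neg at hcon2
    have hpρ : ‖p‖ = ρ := le_antisymm (mem_closedBall_zero_iff.1 hpmem) hcon2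
    have hWp : W p = a * (m^2)⁻¹ := by
      simp only [hW, hpρ, hρ2]
      norm_num
    have hφpM : φ p ≤ φ pM := hpM (mem_closedBall_zero_iff.2 (by linarith))
    have hBle : B₀ ≤ a * (m^2)⁻¹ := by
      have h4 : B₀ * m^2 ≤ a := by
        have h5 := mul_le_mul_of_nonneg_left hm2 hB₀pos.le
        rwa [mul_div_cancel₀ _ (ne_of_gt hB₀pos)] at h5
      rw [← div_eq_mul_inv, le_div_iff₀ (by positivity : (0:ℝ) < m^2)]
      exact h4
    have : φ p ≤ W p := by
      rw [hWp]
      calc φ p ≤ φ pM := hφpM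
      _ ≤ B₀ := le_max_left _ _
      _ ≤ _ := hBle
    linarith
  have hlocal : IsLocalMax (fun x => φ x - W x) p :=
    hp.isLocalMax (closedBall_mem_nhds_of_mem (by simpa using hpρball))
  -- set up barrier line functions
  set b : ℝ := ‖p‖^2 with hb
  have hbR : b < R^2 := by nlinarith [norm_nonneg p]
  set u : ℝ := R^2 - b with hu
  have hupos : 0 < u := by simp only [hu]; linarith
  set Bl : Fin n → ℝ → ℝ := fun i => fun t : ℝ => a * (((R^2 - (b + (2*p i)*t + t^2))^2)⁻¹)
    with hBl
  set d2 : Fin n → ℝ := fun i => 4*a*((R^2-b)^3)⁻¹ + 6*a*(2*p i)^2*((R^2-b)^4)⁻¹ with hd2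
  have hWsec := fun i : Fin n => W_second a R b (2*p i) hbR
  have hmax : ∀ i, IsLocalMax
      (fun t : ℝ => φ (p + t • EuclideanSpace.single i (1:ℝ)) - Bl i t) 0 := by
    intro i
    have hLt : Tendsto (fun t : ℝ => p + t • EuclideanSpace.single i (1:ℝ)) (𝓝 0) (𝓝 p) := by
      have hc : Continuous (fun t : ℝ => p + t • EuclideanSpace.single i (1:ℝ)) := by fun_prop
      simpa using hc.tendsto 0
    have hlocal' : IsMaxFilter (fun x => φ x - W x) (𝓝 p)
        ((fun t : ℝ => p + t • EuclideanSpace.single i (1:ℝ)) 0) := by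
      simpa [IsLocalMax] using hlocal
    have h1 : IsLocalMax
        (fun t : ℝ => (fun x => φ x - W x) (p + t • EuclideanSpace.single i (1:ℝ))) 0 := by
      have := IsMaxFilter.comp_tendsto
        (g := fun t : ℝ => p + t • EuclideanSpace.single i (1:ℝ)) (b := (0:ℝ)) hlocal' hLt
      exact this
    have heq : (fun t : ℝ => (fun x => φ x - W x) (p + t • EuclideanSpace.single i (1:ℝ)))
        = fun t : ℝ => φ (p + t • EuclideanSpace.single i (1:ℝ)) - Bl i t := by
      funext t
      simp only [hW, hBl, line_normsq p i t, hb]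
    rwa [heq] at h1
  have hlap := lap_le φ hφ p Bl d2 (fun i => (hWsec i).1) (fun i => (hWsec i).2.1)
    (fun i => (hWsec i).2.2) hmax
  have hsum : ∑ i, d2 i = 4*n*a*(u^3)⁻¹ + 24*a*‖p‖^2*(u^4)⁻¹ := by
    calc ∑ i, d2 i = ∑ i, (4*a*(u^3)⁻¹ + (24*a*(u^4)⁻¹) * (p i)^2) := by
          apply Finset.sum_congr rfl
          intro i _
          simp only [hd2, hu]
          ring
    _ = n * (4*a*(u^3)⁻¹) + (24*a*(u^4)⁻¹) * ∑ i, (p i)^2 := by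
          rw [Finset.sum_add_distrib, Finset.sum_const, ← Finset.mul_sum]
          simp [Finset.card_univ, nsmul_eq_mul]
    _ = 4*n*a*(u^3)⁻¹ + 24*a*‖p‖^2*(u^4)⁻¹ := by
          rw [← normsq_eq_sum]
          ring
  set J : ℝ := u⁻¹ with hJ
  have hJpos : 0 < J := by positivity
  have huJ : u * J = 1 := mul_inv_cancel₀ (ne_of_gt hupos)
  have hkey : 2 * (φ p)^2 ≤ 4*n*a*(u^3)⁻¹ + 24*a*‖p‖^2*(u^4)⁻¹ := by
    calc 2 * (φ p)^2 ≤ laplacian φ p := hineq p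
    _ ≤ ∑ i, d2 i := hlap
    _ = _ := hsum
  have hiu3 : (u^3)⁻¹ = u * J^4 := by
    rw [hJ]
    field_simp
  have hiu4 : (u^4)⁻¹ = J^4 := by
    rw [hJ, inv_pow]
  have hpn : ‖p‖^2 ≤ R^2 := by nlinarith [norm_nonneg p]
  have huR : u ≤ R^2 := by simp only [hu, hb]; nlinarith [norm_nonneg p]
  have hkey2 : 2 * (φ p)^2 ≤ 2 * (a * J^2)^2 := by
    rw [hiu3, hiu4] at hkey
    have hn0 : (0:ℝ) ≤ n := Nat.cast_nonneg n
    have h1 : 4*n*a*(u * J^4) ≤ 4*n*a*(R^2 * J^4) :=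
      mul_le_mul_of_nonneg_left
        (mul_le_mul_of_nonneg_right huR (by positivity)) (by positivity)
    have h2 : 24*a*‖p‖^2*J^4 ≤ 24*a*R^2*J^4 := by
      nlinarith [mul_le_mul_of_nonneg_left
        (mul_le_mul_of_nonneg_right hpn (show (0:ℝ) ≤ J^4 by positivity))
        (show (0:ℝ) ≤ 24*a by positivity)]
    have h3 : 4*n*a*(R^2*J^4) + 24*a*R^2*J^4 = 2 * (a * J^2)^2 := by
      rw [ha]
      ring
    linarith
  have hWpJ : W p = a * J^2 := by
    simp only [hW, hJ, hu, hb]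
    rw [← inv_pow]
  have haJ : 0 < a * J^2 := by positivity
  have hfin : φ p ≤ a * J^2 := by nlinarith
  rw [← hWpJ] at hfin
  linarith

theorem core2 {n : ℕ} (hn : 1 ≤ n) (φ : EuclideanSpace ℝ (Fin n) → ℝ)
    (hφ : ContDiff ℝ 2 φ)
    (hineq : ∀ x, 2 * (φ x) ^ 2 ≤ laplacian φ x)
    (hle : ∀ x, φ x ≤ 0) : sSup (Set.range φ) = 0 := by
  have hrne : (Set.range φ).Nonempty := ⟨φ 0, 0, rfl⟩
  have hbdd : BddAbove (Set.range φ) := ⟨0, by rintro y ⟨x, rfl⟩; exact hle x⟩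
  set S := sSup (Set.range φ) with hSdef
  have hS0 : S ≤ 0 := csSup_le hrne (by rintro y ⟨x, rfl⟩; exact hle x)
  rcases eq_or_lt_of_le hS0 with h | hSneg
  · exact h
  exfalso
  have hub : ∀ x, φ x ≤ S := fun x => le_csSup hbdd ⟨x, rfl⟩
  have hS2 : 0 < S^2 := by nlinarith
  have hnpos : (0:ℝ) < (n:ℝ) := by exact_mod_cast hn
  set c : ℝ := S^2 / (2*n) with hc
  have hcpos : 0 < c := div_pos hS2 (by positivity)
  have hφ0S : φ 0 ≤ S := hub 0
  have hq : 0 ≤ (S - φ 0)/c := div_nonneg (by linarith) hcpos.le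
  set R : ℝ := Real.sqrt ((S - φ 0)/c) + 1 with hR
  have hsq := Real.sq_sqrt hq
  have hsnn := Real.sqrt_nonneg ((S - φ 0)/c)
  have hR0 : 0 < R := by rw [hR]; linarith
  have hRkey : S - c*R^2 < φ 0 := by
    have h1 : (S - φ 0)/c < R^2 := by rw [hR]; nlinarith
    rw [div_lt_iff₀ hcpos] at h1
    nlinarith
  set ψ : EuclideanSpace ℝ (Fin n) → ℝ := fun x => φ x - c * ‖x‖^2 with hψ
  have hψc : Continuous ψ := hφ.continuous.sub (continuous_const.mul (continuous_norm.pow 2))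
  obtain ⟨p, hpmem, hp⟩ := (isCompact_closedBall (0:EuclideanSpace ℝ (Fin n)) R).exists_isMaxOn
    ⟨0, by simpa using hR0.le⟩ hψc.continuousOn
  have hψ0p : ψ 0 ≤ ψ p := hp (by simpa using hR0.le)
  have hψ0 : ψ 0 = φ 0 := by simp [hψ]
  have hpR : ‖p‖ < R := by
    rcases lt_or_eq_of_le (mem_closedBall_zero_iff.1 hpmem) with h | h
    · exact h
    have h2 : ψ p = φ p - c * R^2 := by simp only [hψ, h]
    have h3 : ψ p ≤ S - c * R^2 := by rw [h2]; linarith [hub p]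
    rw [hψ0] at hψ0p
    linarith
  have hlocal : IsLocalMax ψ p :=
    hp.isLocalMax (closedBall_mem_nhds_of_mem (by simpa using hpR))
  set b : ℝ := ‖p‖^2 with hb
  set Bl : Fin n → ℝ → ℝ := fun i => fun t : ℝ => c * (b + (2*p i)*t + t^2) with hBl
  have hQ := fun i : Fin n => Q_second c b (2*p i)
  have hmax : ∀ i, IsLocalMax
      (fun t : ℝ => φ (p + t • EuclideanSpace.single i (1:ℝ)) - Bl i t) 0 := by
    intro i
    have hLt : Tendsto (fun t : ℝ => p + t • EuclideanSpace.single i (1:ℝ)) (𝓝 0) (𝓝 p) := by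
      have hcL : Continuous (fun t : ℝ => p + t • EuclideanSpace.single i (1:ℝ)) := by fun_prop
      simpa using hcL.tendsto 0
    have hlocal' : IsMaxFilter ψ (𝓝 p)
        ((fun t : ℝ => p + t • EuclideanSpace.single i (1:ℝ)) 0) := by
      simpa [IsLocalMax] using hlocal
    have h1 : IsLocalMax
        (fun t : ℝ => ψ (p + t • EuclideanSpace.single i (1:ℝ))) 0 := by
      have := IsMaxFilter.comp_tendsto
        (g := fun t : ℝ => p + t • EuclideanSpace.single i (1:ℝ)) (b := (0:ℝ)) hlocal' hLt
      exact this
    have heq : (fun t : ℝ => ψ (p + t • EuclideanSpace.single i (1:ℝ)))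
        = fun t : ℝ => φ (p + t • EuclideanSpace.single i (1:ℝ)) - Bl i t := by
      funext t
      simp only [hψ, hBl, line_normsq p i t, hb]
    rwa [heq] at h1
  have hlap := lap_le φ hφ p Bl (fun _ => 2*c) (fun i => (hQ i).1) (fun i => (hQ i).2.1)
    (fun i => (hQ i).2.2) hmax
  have hsum : ∑ _i : Fin n, 2*c = S^2 := by
    rw [Finset.sum_const, Finset.card_univ, Fintype.card_fin, nsmul_eq_mul, hc]
    field_simp
  have hφpS : φ p ≤ S := hub p
  have hφp2 : S^2 ≤ (φ p)^2 := by nlinarith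
  have := hineq p
  rw [hsum] at hlap
  nlinarith

theorem part1 {n : ℕ} (φ : EuclideanSpace ℝ (Fin n) → ℝ) (hφ : ContDiff ℝ 2 φ)
    (hineq : ∀ x, 2 * (φ x) ^ 2 ≤ laplacian φ x) : ∀ x, φ x ≤ 0 := by
  intro x
  by_contra hcon
  push_neg at hcon
  set ε := φ x with hε
  set A : ℝ := Real.sqrt (2*‖x‖^2) + 1 with hA
  set B : ℝ := Real.sqrt (4*(2*(n:ℝ)+12)/ε) + 1 with hB
  set R : ℝ := max (‖x‖ + 1) (max A B) with hR
  have hA0 : 0 ≤ 2*‖x‖^2 := by positivity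
  have hB0 : 0 ≤ 4*(2*(n:ℝ)+12)/ε := by positivity
  have hAs := Real.sq_sqrt hA0
  have hBs := Real.sq_sqrt hB0
  have hAn := Real.sqrt_nonneg (2*‖x‖^2)
  have hBn := Real.sqrt_nonneg (4*(2*(n:ℝ)+12)/ε)
  have hxR : ‖x‖ < R := lt_of_lt_of_le (by linarith) (le_max_left _ _)
  have hR0 : 0 < R := lt_of_le_of_lt (norm_nonneg x) hxR
  have hRA : A ≤ R := le_trans (le_max_left _ _) (le_max_right _ _)
  have hRB : B ≤ R := le_trans (le_max_right _ _) (le_max_right _ _)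
  have hx2 : 2*‖x‖^2 ≤ R^2 := by nlinarith
  have hε2 : 4*(2*(n:ℝ)+12)/ε < R^2 := by
    have hBpos : (0:ℝ) ≤ B := by rw [hB]; linarith
    have h5 : B^2 ≤ R^2 := pow_le_pow_left₀ hBpos hRB 2
    rw [hB] at h5
    nlinarith [h5, hBs, hBn]
  have h1 := core1 φ hφ hineq x R hxR
  have hd : R^2/2 ≤ R^2 - ‖x‖^2 := by linarith
  have hdpos : (0:ℝ) < R^2/2 := by positivity
  have hinv : ((R^2 - ‖x‖^2)^2)⁻¹ ≤ ((R^2/2)^2)⁻¹ := by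
    apply inv_anti₀ (by positivity)
    exact pow_le_pow_left₀ hdpos.le hd 2
  have h2 : φ x ≤ ((2*n+12)*R^2) * ((R^2/2)^2)⁻¹ := by
    calc φ x ≤ ((2*n+12)*R^2) * (((R^2 - ‖x‖^2)^2)⁻¹) := h1
    _ ≤ _ := mul_le_mul_of_nonneg_left hinv (by positivity)
  have h3 : ((2*(n:ℝ)+12)*R^2) * ((R^2/2)^2)⁻¹ = 4*(2*(n:ℝ)+12)/R^2 := by
    field_simp
    ring
  have h4 : 4*(2*(n:ℝ)+12)/R^2 < ε := by
    rw [div_lt_iff₀ (by positivity : (0:ℝ) < R^2)]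
    rw [div_lt_iff₀ hcon] at hε2
    linarith
  rw [h3] at h2
  have : ε < ε := lt_of_le_of_lt (hε ▸ h2) h4
  exact lt_irrefl _ this

/-- If a `C²` function `φ` on Euclidean space satisfies `Δφ ≥ 2φ²`, then
`φ ≤ 0` everywhere, `sup φ = 0`, and if moreover `φ ≥ 0` then `φ ≡ 0`. -/
theorem stmt_9 (n : ℕ) (hn : 1 ≤ n) (φ : EuclideanSpace ℝ (Fin n) → ℝ)
    (hφ : ContDiff ℝ 2 φ)
    (hineq : ∀ x, 2 * (φ x) ^ 2 ≤ laplacian φ x) :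
    (∀ x, φ x ≤ 0) ∧ sSup (Set.range φ) = 0 ∧
      ((∀ x, 0 ≤ φ x) → ∀ x, φ x = 0) := by
  have h1 : ∀ x, φ x ≤ 0 := part1 φ hφ hineq
  exact ⟨h1, core2 hn φ hφ hineq h1, fun hge x => le_antisymm (h1 x) (hge x)⟩
end

section
/- Let n ≥ 1, let e be a unit vector in EuclideanSpace ℝ (Fin n), and let u, v : EuclideanSpace ℝ (Fin n) → ℝ be twice continuously differentiable functions that are harmonic (Δu = Δv = 0 everywhere), satisfy u(x) ≥ 0 for all x, and whose directional derivatives along e satisfy D_e u(x) = 2 u(x) v(x) and D_e v(x) = (v(x))² − (u(x))² + 1 for all x. Then u is identically 1 and v is identically 0. -/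
open Set Filter

section StmtAux

variable {n : ℕ}
local notation "E" => EuclideanSpace ℝ (Fin n)

lemma sdtest {g g1 g2 : ℝ → ℝ} {ε : ℝ} (hε : 0 < ε)
    (h1 : ∀ t ∈ Set.Ioo (-ε) ε, HasDerivAt g (g1 t) t)
    (h2 : ∀ t ∈ Set.Ioo (-ε) ε, HasDerivAt g1 (g2 t) t)
    (hmax : ∀ t ∈ Set.Ioo (-ε) ε, g t ≤ g 0) : g2 0 ≤ 0 := by
  by_contra hpos
  push_neg at hpos
  have h0mem : (0:ℝ) ∈ Set.Ioo (-ε) ε := by constructor <;> linarith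
  have hIoo_nhds : Set.Ioo (-ε) ε ∈ nhds (0:ℝ) := Ioo_mem_nhds (by linarith) hε
  have hlm : IsLocalMax g 0 := by
    filter_upwards [hIoo_nhds] with t ht using hmax t ht
  have hg10 : g1 0 = 0 := by
    have := hlm.deriv_eq_zero
    rwa [(h1 0 h0mem).deriv] at this
  -- slope of g1 tends to g2 0 > 0
  have hslope := hasDerivAt_iff_tendsto_slope.mp (h2 0 h0mem)
  have hev : ∀ᶠ t in nhdsWithin 0 {(0:ℝ)}ᶜ, 0 < slope g1 0 t :=
    hslope.eventually (eventually_gt_nhds hpos)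
  have hev' : ∀ᶠ t in nhdsWithin 0 (Set.Ioi 0), 0 < g1 t := by
    have h2' : ∀ᶠ t in nhdsWithin 0 (Set.Ioi 0), 0 < slope g1 0 t :=
      hev.filter_mono (nhdsWithin_mono 0 (fun t ht => ne_of_gt ht))
    have h3' : ∀ᶠ t in nhdsWithin (0:ℝ) (Set.Ioi 0), (0:ℝ) < t := self_mem_nhdsWithin
    filter_upwards [h2', h3'] with t ht hpt
    have : slope g1 0 t = g1 t / t := by simp [slope_def_field, hg10]
    rw [this] at ht
    exact (div_pos_iff.mp ht).resolve_right (fun ⟨_, h⟩ => absurd hpt (not_lt.mpr h.le)) |>.1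
  rw [eventually_nhdsWithin_iff] at hev'
  obtain ⟨δ₀, hδ₀, hδprop⟩ := Metric.eventually_nhds_iff.mp hev'
  set δ := min (δ₀/2) (ε/2) with hδdef
  have hδpos : 0 < δ := by positivity
  have hδε : δ < ε := lt_of_le_of_lt (min_le_right _ _) (by linarith)
  have hsub : Set.Icc (0:ℝ) δ ⊆ Set.Ioo (-ε) ε := fun t ht =>
    ⟨by linarith [ht.1], lt_of_le_of_lt ht.2 hδε⟩
  have hmono : StrictMonoOn g (Set.Icc 0 δ) := by
    apply strictMonoOn_of_deriv_pos (convex_Icc 0 δ)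
    · exact fun t ht => ((h1 t (hsub ht)).continuousAt).continuousWithinAt
    · intro t ht
      rw [interior_Icc] at ht
      rw [(h1 t (hsub ⟨ht.1.le, ht.2.le⟩)).deriv]
      apply hδprop
      · simp only [Real.dist_eq, sub_zero]
        rw [abs_of_pos ht.1]
        calc t < δ := ht.2
          _ ≤ δ₀/2 := min_le_left _ _
          _ < δ₀ := by linarith
      · exact ht.1
  have : g 0 < g δ := hmono ⟨le_refl 0, hδpos.le⟩ ⟨hδpos.le, le_refl δ⟩ hδpos
  have : g δ ≤ g 0 := hmax δ ⟨by linarith, hδε⟩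
  linarith

lemma hasFDerivAt_sq {𝔼 : Type*} [NormedAddCommGroup 𝔼] [NormedSpace ℝ 𝔼]
    {f : 𝔼 → ℝ} {f' : 𝔼 →L[ℝ] ℝ} {x : 𝔼} (h : HasFDerivAt f f' x) :
    HasFDerivAt (fun y => (f y)^2) ((2 * f x) • f') x := by
  have := h.fun_mul h
  rw [two_mul, add_smul]
  simpa only [sq] using this

lemma hasFDerivAt_inv_comp {𝔼 : Type*} [NormedAddCommGroup 𝔼] [NormedSpace ℝ 𝔼]
    {f : 𝔼 → ℝ} {f' : 𝔼 →L[ℝ] ℝ} {x : 𝔼} (h : HasFDerivAt f f' x) (hx : f x ≠ 0) :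
    HasFDerivAt (fun y => (f y)⁻¹) ((-((f x) ^ 2)⁻¹) • f') x := by
  have := (hasDerivAt_inv hx).comp_hasFDerivAt x h
  exact this

lemma hasFDerivAt_proj (i : Fin n) (z : E) :
    HasFDerivAt (fun w : E => w i) (EuclideanSpace.proj (𝕜 := ℝ) i) z :=
  (EuclideanSpace.proj (𝕜 := ℝ) i).hasFDerivAt

lemma line_hasDerivAt1 {f : E → ℝ} {y a : E} {t : ℝ}
    (hf : ContDiffAt ℝ 2 f (y + t • a)) :
    HasDerivAt (fun r : ℝ => f (y + r • a)) (fderiv ℝ f (y + t • a) a) t := by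
  have hline : HasDerivAt (fun r : ℝ => y + r • a) a t := by
    simpa using ((hasDerivAt_id t).smul_const a).const_add y
  have hfd : HasFDerivAt f (fderiv ℝ f (y + t • a)) (y + t • a) :=
    (hf.differentiableAt two_ne_zero).hasFDerivAt
  exact hfd.comp_hasDerivAt t hline

lemma line_hasDerivAt2 {f : E → ℝ} {y a : E} {t : ℝ}
    (hf : ContDiffAt ℝ 2 f (y + t • a)) :
    HasDerivAt (fun r : ℝ => fderiv ℝ f (y + r • a) a)
      (fderiv ℝ (fderiv ℝ f) (y + t • a) a a) t := by
  have hline : HasDerivAt (fun r : ℝ => y + r • a) a t := by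
    simpa using ((hasDerivAt_id t).smul_const a).const_add y
  have hg : ContDiffAt ℝ 1 (fderiv ℝ f) (y + t • a) := hf.fderiv_right le_rfl
  have hfd : HasFDerivAt (fderiv ℝ f) (fderiv ℝ (fderiv ℝ f) (y + t • a)) (y + t • a) :=
    (hg.differentiableAt one_ne_zero).hasFDerivAt
  have hcomp : HasDerivAt (fun r : ℝ => fderiv ℝ f (y + r • a))
      (fderiv ℝ (fderiv ℝ f) (y + t • a) a) t := hfd.comp_hasDerivAt t hline
  have happ := ((ContinuousLinearMap.apply ℝ ℝ a).hasFDerivAt).comp_hasDerivAt t hcomp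
  exact happ

lemma secondDeriv_nonpos_at_max {f : E → ℝ} {s : Set E} (hs : IsOpen s)
    (hf : ContDiffOn ℝ 2 f s) {y : E} (hy : y ∈ s) (hmax : ∀ x ∈ s, f x ≤ f y) (a : E) :
    fderiv ℝ (fderiv ℝ f) y a a ≤ 0 := by
  have hLcont : Continuous (fun r : ℝ => y + r • a) := by continuity
  have hpre : IsOpen ((fun r : ℝ => y + r • a) ⁻¹' s) := hs.preimage hLcont
  have h0 : (0:ℝ) ∈ (fun r : ℝ => y + r • a) ⁻¹' s := by simp [hy]
  obtain ⟨ε, hε, hball⟩ := Metric.isOpen_iff.mp hpre 0 h0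
  have hball' : Set.Ioo (-ε) ε ⊆ (fun r : ℝ => y + r • a) ⁻¹' s := by
    intro t ht
    apply hball
    simp only [Metric.mem_ball, Real.dist_eq, sub_zero]
    rw [abs_lt]; exact ⟨ht.1, ht.2⟩
  have key : fderiv ℝ (fderiv ℝ f) (y + (0:ℝ) • a) a a ≤ 0 := by
    apply sdtest hε (g := fun r : ℝ => f (y + r • a))
      (g1 := fun r : ℝ => fderiv ℝ f (y + r • a) a)
      (g2 := fun r : ℝ => fderiv ℝ (fderiv ℝ f) (y + r • a) a a)
    · intro t ht
      exact line_hasDerivAt1 (hf.contDiffAt (hs.mem_nhds (hball' ht)))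
    · intro t ht
      exact line_hasDerivAt2 (hf.contDiffAt (hs.mem_nhds (hball' ht)))
    · intro t ht
      simp only [zero_smul, add_zero]
      exact hmax _ (hball' ht)
  simpa using key

lemma laplacian_eq (f : E → ℝ) (x : E) :
    laplacian f x = ∑ i, fderiv ℝ (fderiv ℝ f) x (EuclideanSpace.single i 1) (EuclideanSpace.single i 1) := by
  unfold laplacian
  refine Finset.sum_congr rfl fun i _ => ?_
  rw [iteratedFDeriv_two_apply]
  simp

lemma euclid_decomp (e : E) : e = ∑ i, e i • EuclideanSpace.single i (1:ℝ) := by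
  ext j
  have h : (∑ i, e i • EuclideanSpace.single i (1:ℝ)) j = ∑ i, (e i • EuclideanSpace.single i (1:ℝ)) j :=
    by rw [WithLp.ofLp_sum]; exact Finset.sum_apply j Finset.univ _
  rw [h]
  simp [EuclideanSpace.single_apply]

noncomputable def Qd (x₀ : E) : E → (E →L[ℝ] ℝ) :=
  fun z => ∑ i, (2*(z i - x₀ i)) • EuclideanSpace.proj (𝕜 := ℝ) i

def qq (x₀ : E) : E → ℝ := fun z => ∑ i, (z i - x₀ i)^2

lemma hasFDerivAt_qq (x₀ z : E) : HasFDerivAt (qq x₀) (Qd x₀ z) z := by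
  apply HasFDerivAt.fun_sum
  intro i _
  exact hasFDerivAt_sq ((hasFDerivAt_proj i z).sub_const (x₀ i))

lemma qq_nonneg (x₀ z : E) : 0 ≤ qq x₀ z := Finset.sum_nonneg fun i _ => sq_nonneg _

lemma qq_self (x₀ : E) : qq x₀ x₀ = 0 := by simp [qq]

lemma Qd_apply (x₀ z b : E) : Qd x₀ z b = ∑ i, 2*(z i - x₀ i) * b i := by
  unfold Qd
  rw [ContinuousLinearMap.sum_apply]
  exact Finset.sum_congr rfl fun i _ => rfl

lemma Qd_single (x₀ z : E) (j : Fin n) :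
    Qd x₀ z (EuclideanSpace.single j 1) = 2*(z j - x₀ j) := by
  rw [Qd_apply]
  rw [Finset.sum_eq_single j]
  · simp
  · intro i _ hij; simp [EuclideanSpace.single_apply, hij]
  · simp

lemma norm_eq_sqrt_qq (x₀ z : E) : ‖z - x₀‖ = Real.sqrt (qq x₀ z) := by
  rw [EuclideanSpace.norm_eq]
  congr 1
  apply Finset.sum_congr rfl
  intro i _
  rw [PiLp.sub_apply, Real.norm_eq_abs, sq_abs]

lemma contDiff_qq (x₀ : E) : ContDiff ℝ 2 (qq x₀) := by
  apply ContDiff.sum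
  intro i _
  exact (((EuclideanSpace.proj (𝕜 := ℝ) i).contDiff).sub contDiff_const).pow 2

lemma hasFDerivAt_pp (x₀ : E) (R : ℝ) (z : E) :
    HasFDerivAt (fun w => R^2 - qq x₀ w) (-Qd x₀ z) z := by
  simpa using (hasFDerivAt_const (R^2) z).fun_sub (hasFDerivAt_qq x₀ z)

lemma hasFDerivAt_cube (x₀ : E) (R : ℝ) (z : E) :
    HasFDerivAt (fun w => (R^2 - qq x₀ w)^3) ((-(3*(R^2 - qq x₀ z)^2)) • Qd x₀ z) z := by
  have hp := hasFDerivAt_pp x₀ R z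
  have h2 := (hasFDerivAt_sq hp).mul hp
  have hfun : (fun w => (R^2 - qq x₀ w)^3) = fun y => (R^2 - qq x₀ y)^2 * (R^2 - qq x₀ y) := by
    funext w; ring
  rw [hfun]
  have heq : (R^2 - qq x₀ z)^2 • (-Qd x₀ z) + (R^2 - qq x₀ z) • ((2*(R^2 - qq x₀ z)) • (-Qd x₀ z))
      = (-(3*(R^2 - qq x₀ z)^2)) • Qd x₀ z := by module
  exact heq ▸ h2

noncomputable def ww (x₀ : E) (R c : ℝ) : E → ℝ := fun z => c * ((R^2 - qq x₀ z)^2)⁻¹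

lemma hasFDerivAt_ww (x₀ : E) {R : ℝ} (c : ℝ) {z : E} (hz : R^2 - qq x₀ z ≠ 0) :
    HasFDerivAt (ww x₀ R c) ((2*c*(((R^2 - qq x₀ z)^3)⁻¹)) • Qd x₀ z) z := by
  have hk := hasFDerivAt_sq (hasFDerivAt_pp x₀ R z)
  have hki := hasFDerivAt_inv_comp hk (pow_ne_zero 2 hz)
  have hw := hki.const_mul c
  have heq : c • ((-(((R^2 - qq x₀ z)^2)^2)⁻¹) • ((2*(R^2 - qq x₀ z)) • (-Qd x₀ z)))
      = (2*c*(((R^2 - qq x₀ z)^3)⁻¹)) • Qd x₀ z := by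
    rw [show -Qd x₀ z = ((-1 : ℝ) • Qd x₀ z) from (neg_one_smul ℝ _).symm]
    rw [smul_smul, smul_smul, smul_smul]
    congr 1
    field_simp
  exact heq ▸ hw

noncomputable def mm (x₀ : E) (R c : ℝ) : E → ℝ := fun z => (2*c) * ((R^2 - qq x₀ z)^3)⁻¹

lemma hasFDerivAt_mm (x₀ : E) {R : ℝ} (c : ℝ) {z : E} (hz : R^2 - qq x₀ z ≠ 0) :
    HasFDerivAt (mm x₀ R c) ((6*c*(((R^2 - qq x₀ z)^4)⁻¹)) • Qd x₀ z) z := by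
  have hki := hasFDerivAt_inv_comp (hasFDerivAt_cube x₀ R z) (pow_ne_zero 3 hz)
  have hw := hki.const_mul (2*c)
  have heq : (2*c) • ((-(((R^2 - qq x₀ z)^3) ^ 2)⁻¹) • ((-(3*(R^2 - qq x₀ z)^2)) • Qd x₀ z))
      = (6*c*(((R^2 - qq x₀ z)^4)⁻¹)) • Qd x₀ z := by
    rw [smul_smul, smul_smul]
    congr 1
    field_simp
    ring
  exact heq ▸ hw

noncomputable def Qd' : (E →L[ℝ] E →L[ℝ] ℝ) :=
  ∑ i, (((2:ℝ) • EuclideanSpace.proj (𝕜 := ℝ) i).smulRight (EuclideanSpace.proj (𝕜 := ℝ) i))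

lemma hasFDerivAt_Qd (x₀ z : E) : HasFDerivAt (Qd x₀) (Qd' (n := n)) z := by
  unfold Qd Qd'
  apply HasFDerivAt.fun_sum
  intro i _
  have hc : HasFDerivAt (fun w : E => 2*(w i - x₀ i)) ((2:ℝ) • EuclideanSpace.proj (𝕜 := ℝ) i) z :=
    ((hasFDerivAt_proj i z).sub_const (x₀ i)).const_mul 2
  have h := hc.fun_smul (hasFDerivAt_const (EuclideanSpace.proj (𝕜 := ℝ) i) z)
  simpa using h

lemma Qd'_single (j : Fin n) :
    Qd' (n := n) (EuclideanSpace.single j 1) (EuclideanSpace.single j 1) = 2 := by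
  unfold Qd'
  rw [ContinuousLinearMap.sum_apply]
  have : ∀ i : Fin n, (((2:ℝ) • EuclideanSpace.proj (𝕜 := ℝ) i).smulRight
      (EuclideanSpace.proj (𝕜 := ℝ) i)) (EuclideanSpace.single j 1) (EuclideanSpace.single j 1)
      = 2 * (EuclideanSpace.single j 1 i) * (EuclideanSpace.single j 1 i) := by
    intro i
    rw [ContinuousLinearMap.smulRight_apply, ContinuousLinearMap.smul_apply,
      ContinuousLinearMap.smul_apply]
    simp only [smul_eq_mul]
    rfl
  rw [ContinuousLinearMap.sum_apply]
  rw [Finset.sum_congr rfl (fun i _ => this i)]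
  rw [Finset.sum_eq_single j]
  · simp
  · intro i _ hij
    simp [EuclideanSpace.single_apply, hij]
  · simp

noncomputable def W1 (x₀ : E) (R c : ℝ) : E → (E →L[ℝ] ℝ) :=
  fun z => mm x₀ R c z • Qd x₀ z

lemma hasFDerivAt_ww' (x₀ : E) {R : ℝ} (c : ℝ) {z : E} (hz : R^2 - qq x₀ z ≠ 0) :
    HasFDerivAt (ww x₀ R c) (W1 x₀ R c z) z := by
  have h := hasFDerivAt_ww x₀ c hz
  have : (2*c*(((R^2 - qq x₀ z)^3)⁻¹)) • Qd x₀ z = W1 x₀ R c z := rfl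
  rwa [this] at h

noncomputable def D2W (x₀ : E) (R c : ℝ) (z : E) : E →L[ℝ] E →L[ℝ] ℝ :=
  mm x₀ R c z • Qd' (n := n) + ((6*c*(((R^2 - qq x₀ z)^4)⁻¹)) • Qd x₀ z).smulRight (Qd x₀ z)

lemma hasFDerivAt_W1 (x₀ : E) {R : ℝ} (c : ℝ) {z : E} (hz : R^2 - qq x₀ z ≠ 0) :
    HasFDerivAt (W1 x₀ R c) (D2W x₀ R c z) z :=
  (hasFDerivAt_mm x₀ c hz).smul (hasFDerivAt_Qd x₀ z)

lemma sumD2w (x₀ : E) (R c : ℝ) (y : E) :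
    ∑ j, D2W x₀ R c y (EuclideanSpace.single j 1) (EuclideanSpace.single j 1)
    = 2*n*(mm x₀ R c y) + 24*c*(((R^2 - qq x₀ y)^4)⁻¹) * qq x₀ y := by
  have hterm : ∀ j : Fin n, D2W x₀ R c y
      (EuclideanSpace.single j 1) (EuclideanSpace.single j 1)
      = 2 * mm x₀ R c y + 6*c*(((R^2 - qq x₀ y)^4)⁻¹) * (2*(y j - x₀ j)) * (2*(y j - x₀ j)) := by
    intro j
    unfold D2W
    simp only [ContinuousLinearMap.add_apply, ContinuousLinearMap.smul_apply,
      ContinuousLinearMap.smulRight_apply]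
    rw [Qd'_single, Qd_single]
    simp only [smul_eq_mul]
    ring
  rw [Finset.sum_congr rfl (fun j _ => hterm j)]
  rw [Finset.sum_add_distrib]
  rw [Finset.sum_const]
  have : ∑ j, 6*c*(((R^2 - qq x₀ y)^4)⁻¹) * (2*(y j - x₀ j)) * (2*(y j - x₀ j))
      = 24*c*(((R^2 - qq x₀ y)^4)⁻¹) * qq x₀ y := by
    unfold qq
    rw [Finset.mul_sum]
    apply Finset.sum_congr rfl
    intro j _
    ring
  rw [this]
  simp only [Finset.card_univ, Fintype.card_fin, nsmul_eq_mul]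
  ring

lemma contDiffOn_ww (x₀ : E) (R c : ℝ) :
    ContDiffOn ℝ 2 (ww x₀ R c) {z : E | 0 < R^2 - qq x₀ z} := by
  have h1 : ContDiff ℝ 2 (fun z : E => (R^2 - qq x₀ z)^2) :=
    (contDiff_const.sub (contDiff_qq x₀)).pow 2
  have h2 : ContDiffOn ℝ 2 (fun z : E => ((R^2 - qq x₀ z)^2)⁻¹) {z : E | 0 < R^2 - qq x₀ z} :=
    (h1.contDiffOn).inv (fun z hz => pow_ne_zero 2 (ne_of_gt hz))
  exact contDiffOn_const.mul h2

lemma fderiv_fderiv_ww (x₀ : E) (R c : ℝ) {y : E} (hy : 0 < R^2 - qq x₀ y) :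
    fderiv ℝ (fderiv ℝ (ww x₀ R c)) y = D2W x₀ R c y := by
  have hsopen : IsOpen {z : E | 0 < R^2 - qq x₀ z} :=
    isOpen_lt continuous_const (continuous_const.sub (contDiff_qq x₀).continuous)
  have hev : fderiv ℝ (ww x₀ R c) =ᶠ[nhds y] W1 x₀ R c := by
    filter_upwards [hsopen.mem_nhds hy] with z hz using (hasFDerivAt_ww' x₀ c (ne_of_gt hz)).fderiv
  rw [hev.fderiv_eq]
  exact (hasFDerivAt_W1 x₀ c (ne_of_gt hy)).fderiv

set_option maxHeartbeats 1600000 in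
lemma liouville (φ : E → ℝ) (hφ : ContDiff ℝ 2 φ) (hφ0 : ∀ x, 0 ≤ φ x)
    (hkey : ∀ x, 2*(φ x)^2 ≤ ∑ i, fderiv ℝ (fderiv ℝ φ) x
      (EuclideanSpace.single i 1) (EuclideanSpace.single i 1)) :
    ∀ x, φ x = 0 := by
  have main : ∀ (x₀ : E) (R : ℝ), 0 < R → φ x₀ ≤ (2*(n:ℝ)+12)/R^2 := by
    intro x₀ R hR
    by_contra hcon
    push_neg at hcon
    set c : ℝ := (2*(n:ℝ)+12)*R^2 with hc
    have hc0 : 0 < c := by positivity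
    set s : Set E := {z | 0 < R^2 - qq x₀ z} with hsdef
    have hsopen : IsOpen s :=
      isOpen_lt continuous_const (continuous_const.sub (contDiff_qq x₀).continuous)
    have hx₀p : R^2 - qq x₀ x₀ = R^2 := by rw [qq_self]; ring
    have hx₀s : x₀ ∈ s := by
      show 0 < R^2 - qq x₀ x₀
      rw [hx₀p]; positivity
    have hwx₀ : ww x₀ R c x₀ = (2*(n:ℝ)+12)/R^2 := by
      show c * ((R^2 - qq x₀ x₀)^2)⁻¹ = (2*(n:ℝ)+12)/R^2
      rw [hx₀p, hc]
      field_simp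
    obtain ⟨zA, hzA, hzAmax⟩ := (isCompact_closedBall x₀ R).exists_isMaxOn
      ⟨x₀, Metric.mem_closedBall_self hR.le⟩ (hφ.continuous.continuousOn)
    set A := φ zA with hA
    have hA0 : 0 ≤ A := hφ0 zA
    set σ : ℝ := min (R^2) (Real.sqrt (c/(A+1))) with hσdef
    have hσ0 : 0 < σ := lt_min (by positivity) (Real.sqrt_pos.mpr (by positivity))
    set K : Set E := {z | σ ≤ R^2 - qq x₀ z} with hKdef
    have hKs : K ⊆ s := fun z hz => lt_of_lt_of_le hσ0 hz
    have hball : ∀ z : E, qq x₀ z ≤ R^2 → z ∈ Metric.closedBall x₀ R := by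
      intro z hz
      rw [Metric.mem_closedBall, dist_eq_norm, norm_eq_sqrt_qq]
      calc Real.sqrt (qq x₀ z) ≤ Real.sqrt (R^2) := Real.sqrt_le_sqrt hz
        _ = R := Real.sqrt_sq hR.le
    have hKball : K ⊆ Metric.closedBall x₀ R := by
      intro z hz
      have hz' : σ ≤ R^2 - qq x₀ z := hz
      exact hball z (by linarith)
    have hsball : s ⊆ Metric.closedBall x₀ R := by
      intro z hz
      have hz' : 0 < R^2 - qq x₀ z := hz
      exact hball z (by linarith)
    have hKclosed : IsClosed K :=
      isClosed_le continuous_const (continuous_const.sub (contDiff_qq x₀).continuous)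
    have hKcpt : IsCompact K := (isCompact_closedBall x₀ R).of_isClosed_subset hKclosed hKball
    have hx₀K : x₀ ∈ K := by
      show σ ≤ R^2 - qq x₀ x₀
      rw [hx₀p]
      exact min_le_left _ _
    set h : E → ℝ := fun z => φ z - ww x₀ R c z with hhdef
    have hwcont : ContinuousOn (ww x₀ R c) K := fun z hz =>
      ((hasFDerivAt_ww' x₀ c (ne_of_gt (hKs hz))).differentiableAt.continuousAt).continuousWithinAt
    obtain ⟨y, hyK, hymax⟩ := hKcpt.exists_isMaxOn ⟨x₀, hx₀K⟩
      ((hφ.continuous.continuousOn).sub hwcont)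
    have hymax' : ∀ z ∈ K, h z ≤ h y := fun z hz => hymax hz
    have hhx₀ : 0 < h x₀ := by
      show 0 < φ x₀ - ww x₀ R c x₀
      rw [hwx₀]
      linarith
    have houtside : ∀ z ∈ s, z ∉ K → h z < 0 := by
      intro z hzs hzK
      have hpz : 0 < R^2 - qq x₀ z := hzs
      have hpσ : R^2 - qq x₀ z < σ := not_le.mp hzK
      have hlt : R^2 - qq x₀ z < Real.sqrt (c/(A+1)) := lt_of_lt_of_le hpσ (min_le_right _ _)
      have hsq : (R^2 - qq x₀ z)^2 < c/(A+1) := (Real.lt_sqrt hpz.le).mp hlt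
      have hA1 : (0:ℝ) < A + 1 := by linarith
      have h2 : (R^2 - qq x₀ z)^2 * (A+1) < c := (lt_div_iff₀ hA1).mp hsq
      have hip : 0 < ((R^2 - qq x₀ z)^2)⁻¹ := inv_pos.mpr (by positivity)
      have hinv : (R^2 - qq x₀ z)^2 * ((R^2 - qq x₀ z)^2)⁻¹ = 1 :=
        mul_inv_cancel₀ (by positivity)
      have hwz : A + 1 ≤ ww x₀ R c z := by
        show A + 1 ≤ c * ((R^2 - qq x₀ z)^2)⁻¹
        rw [← div_eq_mul_inv]
        exact (le_div_iff₀ (by positivity)).mpr (by nlinarith [h2])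
      have hφz : φ z ≤ A := hzAmax (hsball hzs)
      show φ z - ww x₀ R c z < 0
      linarith
    have hmaxall : ∀ z ∈ s, h z ≤ h y := by
      intro z hz
      by_cases hzK : z ∈ K
      · exact hymax' z hzK
      · have h1 := houtside z hz hzK
        have h2 := hymax' x₀ hx₀K
        linarith
    have hys : y ∈ s := hKs hyK
    have hhy : 0 < h y := lt_of_lt_of_le hhx₀ (hymax' x₀ hx₀K)
    have hpy : 0 < R^2 - qq x₀ y := hys
    have hhC2 : ContDiffOn ℝ 2 h s := (hφ.contDiffOn).sub (contDiffOn_ww x₀ R c)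
    have hsum_nonpos : ∑ j, fderiv ℝ (fderiv ℝ h) y
        (EuclideanSpace.single j 1) (EuclideanSpace.single j 1) ≤ 0 :=
      Finset.sum_nonpos (fun j _ => secondDeriv_nonpos_at_max hsopen hhC2 hys hmaxall _)
    have hdiff1 : DifferentiableAt ℝ (fderiv ℝ φ) y :=
      ((hφ.fderiv_right (le_refl 2)).differentiable one_ne_zero) y
    have hdiff2 : DifferentiableAt ℝ (W1 x₀ R c) y :=
      (hasFDerivAt_W1 x₀ c (ne_of_gt hys)).differentiableAt
    have hev : fderiv ℝ h =ᶠ[nhds y] (fun z => fderiv ℝ φ z - W1 x₀ R c z) := by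
      filter_upwards [hsopen.mem_nhds hys] with z hz
      exact (((hφ.differentiable two_ne_zero z).hasFDerivAt).sub
        (hasFDerivAt_ww' x₀ c (ne_of_gt hz))).fderiv
    have hsplit : fderiv ℝ (fderiv ℝ h) y = fderiv ℝ (fderiv ℝ φ) y - D2W x₀ R c y := by
      rw [hev.fderiv_eq, fderiv_fun_sub hdiff1 hdiff2,
        (hasFDerivAt_W1 x₀ c (ne_of_gt hys)).fderiv]
    have hsum_split : ∑ j, fderiv ℝ (fderiv ℝ h) y
        (EuclideanSpace.single j 1) (EuclideanSpace.single j 1)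
        = (∑ j, fderiv ℝ (fderiv ℝ φ) y (EuclideanSpace.single j 1) (EuclideanSpace.single j 1))
          - ∑ j, D2W x₀ R c y (EuclideanSpace.single j 1) (EuclideanSpace.single j 1) := by
      rw [hsplit, ← Finset.sum_sub_distrib]
      exact Finset.sum_congr rfl fun j _ => by
        rw [ContinuousLinearMap.sub_apply, ContinuousLinearMap.sub_apply]
    -- numeric contradiction
    set p : ℝ := R^2 - qq x₀ y with hpdef
    set iv : ℝ := p⁻¹ with hivdef
    have hiv : 0 < iv := inv_pos.mpr hpy
    have hpiv : p * iv = 1 := mul_inv_cancel₀ (ne_of_gt hpy)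
    have hq0 : 0 ≤ qq x₀ y := qq_nonneg x₀ y
    have hpR : p ≤ R^2 := by rw [hpdef]; linarith
    have hqy : qq x₀ y = R^2 - p := by rw [hpdef]; ring
    have hwy : ww x₀ R c y = c * iv^2 := by
      show c * ((R^2 - qq x₀ y)^2)⁻¹ = c * iv^2
      rw [hivdef, ← inv_pow]
    have hmm : mm x₀ R c y = 2*c*iv^3 := by
      show (2*c) * ((R^2 - qq x₀ y)^3)⁻¹ = 2*c*iv^3
      rw [hivdef, ← inv_pow]
      try ring
    have hsumW : ∑ j, D2W x₀ R c y (EuclideanSpace.single j 1) (EuclideanSpace.single j 1)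
        = 2*(n:ℝ)*(2*c*iv^3) + 24*c*iv^4 * (R^2 - p) := by
      rw [sumD2w, hmm, hqy]
      have e : R^2 - (R^2 - p) = p := by ring
      rw [e, hivdef]
      try rw [← inv_pow]
      try rfl
    have hwy_pos : 0 < ww x₀ R c y := by
      rw [hwy]; positivity
    have hφy : ww x₀ R c y < φ y := by
      have : 0 < φ y - ww x₀ R c y := hhy
      linarith
    have hkey_y := hkey y
    -- combine: 2*(c*iv^2)^2 < sum D2W
    have hchain : 2*(c*iv^2)^2 < 2*(n:ℝ)*(2*c*iv^3) + 24*c*iv^4 * (R^2 - p) := by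
      have h1 : 2*(ww x₀ R c y)^2 < 2*(φ y)^2 := by nlinarith
      rw [hwy] at h1
      linarith [hkey_y, hsum_nonpos, hsum_split, hsumW]
    -- multiply by p^4
    have hp4 : 0 < p^4 := by positivity
    have hmul := mul_lt_mul_of_pos_right hchain hp4
    have h4 : iv^4 * p^4 = 1 := by
      rw [← mul_pow, mul_comm iv p, hpiv, one_pow]
    have h3 : iv^3 * p^3 = 1 := by
      rw [← mul_pow, mul_comm iv p, hpiv, one_pow]
    have h34 : iv^3 * p^4 = p := by
      have e : iv^3 * p^4 = (iv^3 * p^3) * p := by ring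
      rw [e, h3, one_mul]
    have hred : (2*(c*iv^2)^2) * p^4 = 2*c^2 := by
      linear_combination 2*c^2 * h4
    have hred2 : (2*(n:ℝ)*(2*c*iv^3) + 24*c*iv^4 * (R^2 - p)) * p^4
        = 4*(n:ℝ)*c*p + 24*c*(R^2-p) := by
      linear_combination 4*(n:ℝ)*c*h34 + 24*c*(R^2-p)*h4
    rw [hred, hred2] at hmul
    -- final contradiction
    have hb1 : 4*(n:ℝ)*c*p ≤ 4*(n:ℝ)*c*R^2 := by
      have : (0:ℝ) ≤ 4*(n:ℝ)*c := by positivity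
      nlinarith
    have hb2 : 24*c*(R^2-p) < 24*c*R^2 := by nlinarith
    rw [hc] at hmul hb1 hb2
    nlinarith
  -- conclude
  intro x
  by_contra hx
  have hx' : 0 < φ x := lt_of_le_of_ne (hφ0 x) (Ne.symm hx)
  set R : ℝ := Real.sqrt ((2*(n:ℝ)+13)/φ x) with hRdef
  have hfrac : 0 < (2*(n:ℝ)+13)/φ x := by positivity
  have hR : 0 < R := Real.sqrt_pos.mpr hfrac
  have hRsq : R^2 = (2*(n:ℝ)+13)/φ x := Real.sq_sqrt hfrac.le
  have hle := main x R hR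
  rw [hRsq] at hle
  rw [div_div_eq_mul_div] at hle
  have h13 : (0:ℝ) < 2*(n:ℝ)+13 := by positivity
  rw [le_div_iff₀ h13] at hle
  nlinarith

lemma clm_sq_apply_le (L : E →L[ℝ] ℝ) (e : E) (he : ∑ i, (e i)^2 = 1) :
    (L e)^2 ≤ ∑ i, (L (EuclideanSpace.single i 1))^2 := by
  have h1 : L e = ∑ i, e i * L (EuclideanSpace.single i 1) := by
    conv_lhs => rw [euclid_decomp e]
    rw [map_sum]
    exact Finset.sum_congr rfl fun i _ => by rw [map_smul, smul_eq_mul]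
  rw [h1]
  calc (∑ i, e i * L (EuclideanSpace.single i 1))^2
      ≤ (∑ i, (e i)^2) * (∑ i, (L (EuclideanSpace.single i 1))^2) :=
        Finset.sum_mul_sq_le_sq_mul_sq _ _ _
    _ = ∑ i, (L (EuclideanSpace.single i 1))^2 := by rw [he, one_mul]


end StmtAux

/-- If `u, v` are `C²` harmonic functions on Euclidean space with `u ≥ 0` whose
directional derivatives along a unit vector `e` satisfy `D_e u = 2uv` and
`D_e v = v² − u² + 1`, then `u ≡ 1` and `v ≡ 0`. -/
theorem stmt_10 (n : ℕ) (hn : 1 ≤ n) (e : EuclideanSpace ℝ (Fin n)) (he : ‖e‖ = 1)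
    (u v : EuclideanSpace ℝ (Fin n) → ℝ)
    (hu : ContDiff ℝ 2 u) (hv : ContDiff ℝ 2 v)
    (hu0 : ∀ x, laplacian u x = 0) (hv0 : ∀ x, laplacian v x = 0)
    (hpos : ∀ x, 0 ≤ u x)
    (hDu : ∀ x, fderiv ℝ u x e = 2 * u x * v x)
    (hDv : ∀ x, fderiv ℝ v x e = (v x) ^ 2 - (u x) ^ 2 + 1) :
    (∀ x, u x = 1) ∧ (∀ x, v x = 0) := by
  clear hn
  set φ : EuclideanSpace ℝ (Fin n) → ℝ := fun x => (u x - 1)^2 + (v x)^2 with hφdef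
  have hφC2 : ContDiff ℝ 2 φ := ((hu.sub contDiff_const).pow 2).add (hv.pow 2)
  have hφ0 : ∀ x, 0 ≤ φ x := fun x => by positivity
  have hu' : ∀ z, HasFDerivAt u (fderiv ℝ u z) z :=
    fun z => (hu.differentiable two_ne_zero z).hasFDerivAt
  have hv' : ∀ z, HasFDerivAt v (fderiv ℝ v z) z :=
    fun z => (hv.differentiable two_ne_zero z).hasFDerivAt
  have hF : ∀ z, fderiv ℝ φ z
      = (2*(u z - 1)) • fderiv ℝ u z + (2 * v z) • fderiv ℝ v z := by
    intro z
    have h1 : HasFDerivAt (fun x => (u x - 1)^2) ((2*(u z - 1)) • fderiv ℝ u z) z := by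
      have := hasFDerivAt_sq ((hu' z).sub_const 1)
      simpa using this
    have h2 : HasFDerivAt (fun x => (v x)^2) ((2 * v z) • fderiv ℝ v z) z :=
      hasFDerivAt_sq (hv' z)
    exact (h1.add h2).fderiv
  have hDu2 : ∀ z, HasFDerivAt (fderiv ℝ u) (fderiv ℝ (fderiv ℝ u) z) z :=
    fun z => (((hu.fderiv_right (le_refl 2)).differentiable one_ne_zero) z).hasFDerivAt
  have hDv2 : ∀ z, HasFDerivAt (fderiv ℝ v) (fderiv ℝ (fderiv ℝ v) z) z :=
    fun z => (((hv.fderiv_right (le_refl 2)).differentiable one_ne_zero) z).hasFDerivAt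
  have hD2 : ∀ (z a b : EuclideanSpace ℝ (Fin n)),
      fderiv ℝ (fderiv ℝ φ) z a b
      = 2*(u z - 1) * (fderiv ℝ (fderiv ℝ u) z a b)
        + 2*(fderiv ℝ u z a)*(fderiv ℝ u z b)
        + 2*(v z) * (fderiv ℝ (fderiv ℝ v) z a b)
        + 2*(fderiv ℝ v z a)*(fderiv ℝ v z b) := by
    intro z a b
    have hfunext : (fderiv ℝ φ)
        = fun w => (2*(u w - 1)) • fderiv ℝ u w + (2 * v w) • fderiv ℝ v w := funext hF
    rw [hfunext]
    have hc1 : HasFDerivAt (fun w => 2*(u w - 1)) ((2:ℝ) • fderiv ℝ u z) z := by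
      have := ((hu' z).sub_const 1).const_mul (2:ℝ)
      simpa using this
    have hc2 : HasFDerivAt (fun w => 2 * v w) ((2:ℝ) • fderiv ℝ v z) z := by
      have := (hv' z).const_mul (2:ℝ)
      simpa using this
    have A1 := hc1.fun_smul (hDu2 z)
    have A2 := hc2.fun_smul (hDv2 z)
    rw [(A1.fun_add A2).fderiv]
    simp only [ContinuousLinearMap.add_apply, ContinuousLinearMap.smul_apply,
      ContinuousLinearMap.smulRight_apply, smul_eq_mul]
    ring
  -- key inequality
  have hkey : ∀ x, 2*(φ x)^2 ≤ ∑ i, fderiv ℝ (fderiv ℝ φ) x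
      (EuclideanSpace.single i 1) (EuclideanSpace.single i 1) := by
    intro x
    have hsum : ∑ i, fderiv ℝ (fderiv ℝ φ) x
        (EuclideanSpace.single i 1) (EuclideanSpace.single i 1)
        = 2*(u x - 1) * laplacian u x
          + 2*(∑ i, (fderiv ℝ u x (EuclideanSpace.single i 1))^2)
          + 2*(v x) * laplacian v x
          + 2*(∑ i, (fderiv ℝ v x (EuclideanSpace.single i 1))^2) := by
      rw [laplacian_eq, laplacian_eq, Finset.mul_sum, Finset.mul_sum, Finset.mul_sum,
        Finset.mul_sum]
      rw [← Finset.sum_add_distrib, ← Finset.sum_add_distrib, ← Finset.sum_add_distrib]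
      exact Finset.sum_congr rfl fun i _ => by rw [hD2]; ring
    rw [hsum, hu0, hv0]
    have hee : ∑ i, (e i)^2 = 1 := by
      have h := EuclideanSpace.norm_eq e
      rw [he] at h
      have h0 : (0:ℝ) ≤ ∑ i, ‖e i‖^2 := by positivity
      have h2 : ∑ i, ‖e i‖^2 = 1 := by
        nlinarith [Real.sq_sqrt h0, h]
      simpa [sq_abs] using h2
    have hcs1 := clm_sq_apply_le (fderiv ℝ u x) e hee
    have hcs2 := clm_sq_apply_le (fderiv ℝ v x) e hee
    rw [hDu x] at hcs1
    rw [hDv x] at hcs2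
    have halg : ((u x - 1)^2 + (v x)^2)^2 ≤ (2*u x*v x)^2 + ((v x)^2 - (u x)^2 + 1)^2 := by
      nlinarith [mul_nonneg (hpos x) (show (0:ℝ) ≤ (u x - 1)^2 + (v x)^2 by positivity)]
    have : φ x = (u x - 1)^2 + (v x)^2 := rfl
    rw [this]
    nlinarith [hcs1, hcs2, halg]
  have hzero := liouville φ hφC2 hφ0 hkey
  constructor
  · intro x
    have hx := hzero x
    have h1 : (u x - 1)^2 = 0 := by
      have := sq_nonneg (v x); have := sq_nonneg (u x - 1)
      simp only [hφdef] at hx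
      nlinarith
    have := pow_eq_zero_iff (two_ne_zero) |>.mp h1
    linarith [this]
  · intro x
    have hx := hzero x
    have h1 : (v x)^2 = 0 := by
      have := sq_nonneg (v x); have := sq_nonneg (u x - 1)
      simp only [hφdef] at hx
      nlinarith
    exact pow_eq_zero_iff (two_ne_zero) |>.mp h1
end

section
/- Let U ⊆ ℂ be open, let α₁ : U → ℂ^k be complex differentiable on U with α₁(z) ⋅ α₁(z) = 0 for all z ∈ U, let φ₁ : U → ℂ^k be complex differentiable with φ₁'(z) = α₁(z) on U, and let β₂ : U → ℂ be complex differentiable. Set q(z) = φ₁(z) ⋅ φ₁(z) and define α₂ : U → ℂ^(k+2) by α₂ = (β₂(1 − q), i·β₂(1 + q), 2β₂φ₁). Then for every z ∈ U, both α₂(z) ⋅ α₂(z) = 0 and α₂'(z) ⋅ α₂'(z) = 0. -/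
open Complex

/-- The second-order isotropy step of the Weierstrass representation: if `α₁`
is holomorphic and null (`α₁ ⋅ α₁ = 0`) on an open set `U`, `φ₁' = α₁`, `β₂` is
holomorphic, `q = φ₁ ⋅ φ₁` and `α₂ = (β₂(1 − q), iβ₂(1 + q), 2β₂φ₁)`, then both
`α₂ ⋅ α₂ = 0` and `α₂' ⋅ α₂' = 0` on `U` (dot products complex-bilinear). -/
theorem stmt_12 (k : ℕ) (U : Set ℂ) (hU : IsOpen U)
    (α₁ : ℂ → Fin k → ℂ) (hα₁ : DifferentiableOn ℂ α₁ U)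
    (hnull : ∀ z ∈ U, (∑ j, α₁ z j * α₁ z j) = 0)
    (φ₁ : ℂ → Fin k → ℂ) (hφ₁ : ∀ z ∈ U, HasDerivAt φ₁ (α₁ z) z)
    (β₂ : ℂ → ℂ) (hβ₂ : DifferentiableOn ℂ β₂ U)
    (q : ℂ → ℂ) (hq : ∀ z, q z = ∑ j, φ₁ z j * φ₁ z j)
    (α₂ : ℂ → Fin (k + 2) → ℂ)
    (hα₂ : ∀ z, α₂ z = Fin.cons (β₂ z * (1 - q z))
        (Fin.cons (I * (β₂ z * (1 + q z))) (fun j => 2 * β₂ z * φ₁ z j))) :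
    ∀ z ∈ U, (∑ j, α₂ z j * α₂ z j) = 0 ∧
      (∑ j, deriv α₂ z j * deriv α₂ z j) = 0 := by
  have hα₂' : α₂ = fun z => Fin.cons (β₂ z * (1 - q z))
      (Fin.cons (I * (β₂ z * (1 + q z))) (fun j => 2 * β₂ z * φ₁ z j)) := funext hα₂
  have hq' : q = fun z => ∑ j, φ₁ z j * φ₁ z j := funext hq
  subst hα₂' hq'
  intro z hz
  set b := β₂ z with hb
  set b' := deriv β₂ z with hb'
  have hbd : HasDerivAt β₂ b' z :=
    ((hβ₂ z hz).differentiableAt (hU.mem_nhds hz)).hasDerivAt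
  have hp : ∀ j, HasDerivAt (fun z => φ₁ z j) (α₁ z j) z :=
    fun j => hasDerivAt_pi.mp (hφ₁ z hz) j
  set S0 := ∑ j, φ₁ z j * φ₁ z j with hS0
  set S1 := ∑ j, φ₁ z j * α₁ z j with hS1
  have hqd : HasDerivAt (fun z => ∑ j, φ₁ z j * φ₁ z j) (2 * S1) z := by
    have h : HasDerivAt (fun z => ∑ j, φ₁ z j * φ₁ z j)
        (∑ i, (α₁ z i * φ₁ z i + φ₁ z i * α₁ z i)) z := HasDerivAt.fun_sum (fun j (_ : j ∈ Finset.univ) => (hp j).fun_mul (hp j))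
    convert h using 1
    rw [hS1, Finset.mul_sum]
    exact Finset.sum_congr rfl fun j _ => by ring
  have hDa : HasDerivAt (fun z => (Fin.cons (β₂ z * (1 - ∑ j, φ₁ z j * φ₁ z j))
      (Fin.cons (I * (β₂ z * (1 + ∑ j, φ₁ z j * φ₁ z j)))
        (fun j => 2 * β₂ z * φ₁ z j)) : Fin (k + 2) → ℂ))
      (Fin.cons (b' * (1 - S0) + b * (0 - 2 * S1))
        (Fin.cons (I * (b' * (1 + S0) + b * (0 + 2 * S1)))
          (fun j => 2 * b' * φ₁ z j + 2 * b * α₁ z j)) : Fin (k + 2) → ℂ) z := by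
    apply hasDerivAt_pi.mpr
    intro i
    refine Fin.cases ?_ (fun i => Fin.cases ?_ (fun i => ?_) i) i
    · simp only [Fin.cons_zero]
      exact hbd.mul ((hasDerivAt_const z (1 : ℂ)).sub hqd)
    · simp only [Fin.cons_succ, Fin.cons_zero]
      exact (hbd.mul ((hasDerivAt_const z (1 : ℂ)).add hqd)).const_mul I
    · simp only [Fin.cons_succ]
      exact (hbd.const_mul (2 : ℂ)).mul (hp i)
  constructor
  · simp only [Fin.sum_univ_succ, Fin.cons_zero, Fin.cons_succ]
    have h1 : ∑ j, (2 * b * φ₁ z j) * (2 * b * φ₁ z j) = 4 * b * b * S0 := by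
      rw [hS0, Finset.mul_sum]
      exact Finset.sum_congr rfl fun j _ => by ring
    rw [h1]
    linear_combination (b * (1 + S0)) ^ 2 * Complex.I_sq
  · rw [hDa.deriv]
    simp only [Fin.sum_univ_succ, Fin.cons_zero, Fin.cons_succ]
    have h2 : ∑ j, (2 * b' * φ₁ z j + 2 * b * α₁ z j) * (2 * b' * φ₁ z j + 2 * b * α₁ z j)
        = 4 * b' * b' * S0 + 8 * b * b' * S1 + 4 * b * b * (∑ j, α₁ z j * α₁ z j) := by
      rw [hS0, hS1, Finset.mul_sum, Finset.mul_sum, Finset.mul_sum,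
        ← Finset.sum_add_distrib, ← Finset.sum_add_distrib]
      exact Finset.sum_congr rfl fun j _ => by ring
    rw [h2, hnull z hz]
    linear_combination (b' * (1 + S0) + b * (0 + 2 * S1)) ^ 2 * Complex.I_sq
end

section
/- Let U ⊆ ℂ be open and let G : U → ℂ^n be complex differentiable on U with G'(z) ⋅ G'(z) = ∑_j (G_j'(z))² = 0 for all z ∈ U. Define g : U → ℝ^n by g(z) = (Re G_1(z), …, Re G_n(z)). Then for every z ∈ U the two partial derivatives ∂ₓg(z) (the derivative of g at z in the real direction 1) and ∂ᵧg(z) (the derivative of g at z in the direction i) are orthogonal in ℝ^n and have equal Euclidean norms; moreover each component g_j is harmonic on U (its Laplacian, as a function on ℂ regarded as a two-dimensional real inner product space, vanishes on U). -/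
open Complex

/-- The Laplacian of a real-valued function on `ℂ ≅ ℝ²`: the trace of its
second derivative with respect to the orthonormal basis `{1, i}`. -/
noncomputable def laplacianC (f : ℂ → ℝ) (z : ℂ) : ℝ :=
  iteratedFDeriv ℝ 2 f z ![1, 1] + iteratedFDeriv ℝ 2 f z ![Complex.I, Complex.I]

/-- The continuous `ℝ`-bilinear map `c ↦ v ↦ (c * v).re`. -/
noncomputable def Bre : ℂ →L[ℝ] ℂ →L[ℝ] ℝ :=
  (ContinuousLinearMap.compL ℝ ℂ ℂ ℝ Complex.reCLM).comp (ContinuousLinearMap.mul ℝ ℂ)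

lemma Bre_apply (c v : ℂ) : Bre c v = (c * v).re := rfl

lemma re_hasFDerivAt {F : ℂ → ℂ} {c w : ℂ} (h : HasDerivAt F c w) :
    HasFDerivAt (fun x => (F x).re) (Bre c) w := by
  have h1 : HasFDerivAt (fun x => (F x).re)
      (Complex.reCLM.comp (((1 : ℂ →L[ℂ] ℂ).smulRight c).restrictScalars ℝ)) w :=
    Complex.reCLM.hasFDerivAt.comp w (h.hasFDerivAt.restrictScalars ℝ)
  convert h1 using 1
  ext v
  simp [Bre_apply, mul_comm]

lemma second_re {F : ℂ → ℂ} {U : Set ℂ} (hU : IsOpen U) (hF : DifferentiableOn ℂ F U)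
    {z : ℂ} (hz : z ∈ U) (v : ℂ) :
    iteratedFDeriv ℝ 2 (fun x => (F x).re) z ![v, v]
      = (v * v * deriv (deriv F) z).re := by
  have hA : AnalyticOnNhd ℂ F U := hF.analyticOnNhd hU
  have hF' : DifferentiableOn ℂ (deriv F) U := hA.deriv.differentiableOn
  have hev : fderiv ℝ (fun x => (F x).re) =ᶠ[nhds z] fun w => Bre (deriv F w) := by
    filter_upwards [hU.eventually_mem hz] with w hw
    exact (re_hasFDerivAt ((hF.differentiableAt (hU.mem_nhds hw)).hasDerivAt)).fderiv
  have hdd : HasFDerivAt (fun w => Bre (deriv F w))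
      (Bre.comp (((1 : ℂ →L[ℂ] ℂ).smulRight (deriv (deriv F) z)).restrictScalars ℝ)) z :=
    Bre.hasFDerivAt.comp z
      (((hF'.differentiableAt (hU.mem_nhds hz)).hasDerivAt).hasFDerivAt.restrictScalars ℝ)
  have h2 : fderiv ℝ (fderiv ℝ (fun x => (F x).re)) z
      = Bre.comp (((1 : ℂ →L[ℂ] ℂ).smulRight (deriv (deriv F) z)).restrictScalars ℝ) := by
    rw [hev.fderiv_eq]
    exact hdd.fderiv
  rw [iteratedFDeriv_two_apply, h2]
  simp [Bre_apply, smul_eq_mul]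
  ring_nf

/-- The real part of a null holomorphic curve `G : U → ℂⁿ` (i.e. with
`G' ⋅ G' = 0` for the complex-bilinear dot product) is a conformal harmonic
map: its partial derivatives `∂ₓg` and `∂ᵧg` are orthogonal of equal norm,
and each component of `g` is harmonic. -/
theorem stmt_13 (n : ℕ) (U : Set ℂ) (hU : IsOpen U)
    (G : ℂ → Fin n → ℂ) (hG : DifferentiableOn ℂ G U)
    (hnull : ∀ z ∈ U, (∑ j, deriv G z j * deriv G z j) = 0)
    (g : ℂ → EuclideanSpace ℝ (Fin n)) (hg : ∀ z j, g z j = (G z j).re) :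
    ∀ z ∈ U,
      (inner ℝ (fderiv ℝ g z 1) (fderiv ℝ g z Complex.I) : ℝ) = 0 ∧
      ‖fderiv ℝ g z 1‖ = ‖fderiv ℝ g z Complex.I‖ ∧
      ∀ j, laplacianC (fun w => g w j) z = 0 := by
  intro z hz
  have hmem := hU.mem_nhds hz
  set d : Fin n → ℂ := deriv G z with hd
  have hGz : HasDerivAt G d z := (hG.differentiableAt hmem).hasDerivAt
  have hdj : ∀ j, HasDerivAt (fun w => G w j) (d j) z := fun j =>
    (ContinuousLinearMap.proj j : (Fin n → ℂ) →L[ℂ] ℂ).hasFDerivAt.comp_hasDerivAt z hGz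
  have hgeq : g = fun w => (WithLp.equiv 2 (Fin n → ℝ)).symm fun j => (G w j).re := by
    funext w
    ext j
    rw [hg w j]
    rfl
  set L : ℂ →L[ℝ] EuclideanSpace ℝ (Fin n) :=
    ((PiLp.continuousLinearEquiv 2 ℝ (fun _ : Fin n => ℝ)).symm.toContinuousLinearMap).comp
      (ContinuousLinearMap.pi fun j => Bre (d j)) with hL
  have hfd : HasFDerivAt g L z := by
    rw [hgeq]
    exact ((PiLp.continuousLinearEquiv 2 ℝ
        (fun _ : Fin n => ℝ)).symm.toContinuousLinearMap.hasFDerivAt).comp z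
      (hasFDerivAt_pi.mpr fun j => re_hasFDerivAt (hdj j))
  have happ : ∀ v j, fderiv ℝ g z v j = (d j * v).re := by
    intro v j
    rw [hfd.fderiv]
    rfl
  have hs := hnull z hz
  have hre : ∑ j, ((d j).re * (d j).re) = ∑ j, ((d j).im * (d j).im) := by
    have := congrArg Complex.re hs
    simp only [Complex.re_sum, Complex.mul_re, Complex.zero_re, Finset.sum_sub_distrib] at this
    linarith
  have him : ∑ j, ((d j).re * (d j).im) = 0 := by
    have := congrArg Complex.im hs
    simp only [Complex.im_sum, Complex.mul_im, Complex.zero_im, Finset.sum_add_distrib] at this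
    have h2 : ∑ j, (d j).im * (d j).re = ∑ j, (d j).re * (d j).im := by
      apply Finset.sum_congr rfl; intro j _; ring
    rw [h2] at this
    linarith
  refine ⟨?_, ?_, ?_⟩
  · rw [PiLp.inner_apply]
    simp only [happ, RCLike.inner_apply, conj_trivial, Complex.mul_re, Complex.mul_im,
      Complex.one_re, Complex.one_im, Complex.I_re, Complex.I_im]
    simp only [mul_one, mul_zero, sub_zero, zero_sub, mul_neg]
    simp only [neg_mul, Finset.sum_neg_distrib, neg_eq_zero]
    rw [← him]
    exact Finset.sum_congr rfl fun j _ => mul_comm _ _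
  · rw [EuclideanSpace.norm_eq, EuclideanSpace.norm_eq]
    congr 1
    simp only [happ, Real.norm_eq_abs, _root_.sq_abs, Complex.mul_re, Complex.one_re, Complex.one_im,
      Complex.I_re, Complex.I_im, mul_one, mul_zero, sub_zero, zero_sub]
    simpa [pow_two] using hre
  · intro j
    have hFj : DifferentiableOn ℂ (fun w => G w j) U := (differentiableOn_pi.mp hG) j
    have hfun : (fun w => g w j) = fun w => (G w j).re := by
      funext w; exact hg w j
    rw [hfun, laplacianC, second_re hU hFj hz, second_re hU hFj hz]
    simp [Complex.I_mul_I]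
end

section
/- Let U ⊆ ℂ be open, let α₀ : U → ℂ^(n−4) and φ₀ : U → ℂ^(n−4) be complex differentiable with φ₀' = α₀, and let β₁, β₂ : U → ℂ be complex differentiable and nowhere vanishing. Define α₁ : U → ℂ^(n−2) by α₁ = β₁(1 − φ₀ ⋅ φ₀, i(1 + φ₀ ⋅ φ₀), 2φ₀); let φ₁ : U → ℂ^(n−2) be complex differentiable with φ₁' = α₁; define α₂ : U → ℂ^n by α₂ = β₂(1 − φ₁ ⋅ φ₁, i(1 + φ₁ ⋅ φ₁), 2φ₁); and let G : U → ℂ^n be complex differentiable with G' = α₂. Set g : U → ℝ^n, g(z) = (Re G_1(z), …, Re G_n(z)). Then: (i) G'(z) ⋅ G'(z) = 0 and (ii) G''(z) ⋅ G''(z) = 0 for all z ∈ U; (iii) G'(z) ≠ 0 for all z ∈ U; and (iv) at every z ∈ U the partial derivatives ∂ₓg(z) (derivative of g in the real direction 1) and ∂ᵧg(z) (derivative of g in the direction i) are orthogonal in ℝ^n with equal nonzero Euclidean norms, and each component g_j is harmonic on U. -/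
open Complex

lemma sq_sum_aux (m : ℕ) (b : ℂ) (f : Fin m → ℂ) :
    ∑ j, (2 * b * f j) * (2 * b * f j) = 4 * (b * b) * ∑ j, f j * f j := by
  rw [Finset.mul_sum]
  exact Finset.sum_congr rfl fun j _ => by ring

lemma iso_aux (m : ℕ) (b : ℂ) (f : Fin m → ℂ) :
    (b * (1 - ∑ j, f j * f j)) * (b * (1 - ∑ j, f j * f j)) +
      ((I * (b * (1 + ∑ j, f j * f j))) * (I * (b * (1 + ∑ j, f j * f j))) +
        ∑ j, (2 * b * f j) * (2 * b * f j)) = 0 := by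
  rw [sq_sum_aux]
  linear_combination (b * (1 + ∑ j, f j * f j))^2 * Complex.I_sq

lemma key2_aux (m : ℕ) (b b' : ℂ) (f f' : Fin m → ℂ) :
    (b' * (1 - ∑ j, f j * f j) + b * -(∑ j, (f' j * f j + f j * f' j))) *
      (b' * (1 - ∑ j, f j * f j) + b * -(∑ j, (f' j * f j + f j * f' j))) +
    ((I * (b' * (1 + ∑ j, f j * f j) + b * ∑ j, (f' j * f j + f j * f' j))) *
      (I * (b' * (1 + ∑ j, f j * f j) + b * ∑ j, (f' j * f j + f j * f' j))) +
    ∑ j, (2 * b' * f j + 2 * b * f' j) * (2 * b' * f j + 2 * b * f' j)) =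
    4 * (b * b) * ∑ j, f' j * f' j := by
  have h : ∑ j, (2 * b' * f j + 2 * b * f' j) * (2 * b' * f j + 2 * b * f' j)
      = 4 * (b' * b') * (∑ j, f j * f j) + 4 * (b' * b) * (∑ j, (f' j * f j + f j * f' j))
        + 4 * (b * b) * (∑ j, f' j * f' j) := by
    rw [Finset.mul_sum, Finset.mul_sum, Finset.mul_sum, ← Finset.sum_add_distrib,
      ← Finset.sum_add_distrib]
    exact Finset.sum_congr rfl fun j _ => by ring
  rw [h]
  linear_combination (b' * (1 + ∑ j, f j * f j) + b * ∑ j, (f' j * f j + f j * f' j))^2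
    * Complex.I_sq

lemma sum_cons_sq (m : ℕ) (A B : ℂ) (C : Fin m → ℂ) :
    ∑ j, (Fin.cons A (Fin.cons B C) : Fin (m + 2) → ℂ) j
        * (Fin.cons A (Fin.cons B C) : Fin (m + 2) → ℂ) j
      = A * A + (B * B + ∑ j, C j * C j) := by
  rw [Fin.sum_univ_succ, Fin.sum_univ_succ]
  simp only [Fin.cons_zero, Fin.cons_succ]

/-- The continuous real-linear map `c ↦ (v ↦ (c * v).re)`. -/
noncomputable def PhiRe : ℂ →L[ℝ] (ℂ →L[ℝ] ℝ) :=
  ((ContinuousLinearMap.compL ℝ ℂ ℂ ℝ) Complex.reCLM).comp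
    ((ContinuousLinearMap.restrictScalarsL ℂ ℂ ℂ ℝ ℝ).comp
      ((ContinuousLinearMap.mul ℂ ℂ).restrictScalars ℝ))

@[simp] lemma PhiRe_apply (c v : ℂ) : PhiRe c v = (c * v).re := rfl

lemma hasFDerivAt_re_comp (F : ℂ → ℂ) (c w : ℂ) (h : HasDerivAt F c w) :
    HasFDerivAt (fun x => (F x).re) (PhiRe c) w := by
  have h2 := Complex.reCLM.hasFDerivAt.comp w (h.hasFDerivAt.restrictScalars ℝ)
  refine h2.congr_fderiv ?_
  ext u
  simp [mul_comm]

lemma iteratedFDeriv_two_re_aux (F F' : ℂ → ℂ) (U : Set ℂ) (hU : IsOpen U)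
    (hF : ∀ w ∈ U, HasDerivAt F (F' w) w) (z : ℂ) (hz : z ∈ U)
    (A : ℂ) (hF' : HasDerivAt F' A z) (v : ℂ) :
    iteratedFDeriv ℝ 2 (fun w => (F w).re) z ![v, v] = (A * v * v).re := by
  have hfd : (fun w => fderiv ℝ (fun x => (F x).re) w) =ᶠ[nhds z]
      (fun w => PhiRe (F' w)) := by
    filter_upwards [hU.mem_nhds hz] with w hw
    exact (hasFDerivAt_re_comp F (F' w) w (hF w hw)).fderiv
  have step2 : HasFDerivAt (fun w => PhiRe (F' w))
      (PhiRe.comp (((1 : ℂ →L[ℂ] ℂ).smulRight A).restrictScalars ℝ)) z :=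
    PhiRe.hasFDerivAt.comp z (hF'.hasFDerivAt.restrictScalars ℝ)
  have hsnd : fderiv ℝ (fderiv ℝ (fun x => (F x).re)) z
      = PhiRe.comp (((1 : ℂ →L[ℂ] ℂ).smulRight A).restrictScalars ℝ) := by
    rw [hfd.fderiv_eq]
    exact step2.fderiv
  rw [iteratedFDeriv_two_apply, hsnd]
  simp [smul_eq_mul]
  ring_nf

/-- The Weierstrass-type representation for `1`-isotropic surfaces in
`ℝⁿ` with `n = k + 4`: starting from a holomorphic `α₀ : U → ℂᵏ` with
primitive `φ₀`, nowhere vanishing holomorphic functions `β₁, β₂`, the maps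
`α₁ = β₁(1 − φ₀ ⋅ φ₀, i(1 + φ₀ ⋅ φ₀), 2φ₀)` with primitive `φ₁`, and
`α₂ = β₂(1 − φ₁ ⋅ φ₁, i(1 + φ₁ ⋅ φ₁), 2φ₁)` with primitive `G`, the surface
`g = Re G` satisfies: `G' ⋅ G' = 0`, `G'' ⋅ G'' = 0`, `G' ≠ 0`, and `g` is a
conformal harmonic (minimal) immersion (dot products are complex-bilinear). -/
theorem stmt_14 (k : ℕ) (U : Set ℂ) (hU : IsOpen U)
    (α₀ φ₀ : ℂ → Fin k → ℂ)
    (hα₀ : DifferentiableOn ℂ α₀ U)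
    (hφ₀ : ∀ z ∈ U, HasDerivAt φ₀ (α₀ z) z)
    (β₁ β₂ : ℂ → ℂ)
    (hβ₁ : DifferentiableOn ℂ β₁ U) (hβ₂ : DifferentiableOn ℂ β₂ U)
    (hβ₁0 : ∀ z ∈ U, β₁ z ≠ 0) (hβ₂0 : ∀ z ∈ U, β₂ z ≠ 0)
    (α₁ : ℂ → Fin (k + 2) → ℂ)
    (hα₁ : ∀ z, α₁ z = Fin.cons (β₁ z * (1 - ∑ j, φ₀ z j * φ₀ z j))
        (Fin.cons (I * (β₁ z * (1 + ∑ j, φ₀ z j * φ₀ z j)))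
          (fun j => 2 * β₁ z * φ₀ z j)))
    (φ₁ : ℂ → Fin (k + 2) → ℂ)
    (hφ₁ : ∀ z ∈ U, HasDerivAt φ₁ (α₁ z) z)
    (α₂ : ℂ → Fin (k + 4) → ℂ)
    (hα₂ : ∀ z, α₂ z = Fin.cons (β₂ z * (1 - ∑ j, φ₁ z j * φ₁ z j))
        (Fin.cons (I * (β₂ z * (1 + ∑ j, φ₁ z j * φ₁ z j)))
          (fun j => 2 * β₂ z * φ₁ z j)))
    (G : ℂ → Fin (k + 4) → ℂ)
    (hG : ∀ z ∈ U, HasDerivAt G (α₂ z) z)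
    (g : ℂ → EuclideanSpace ℝ (Fin (k + 4)))
    (hg : ∀ z j, g z j = (G z j).re) :
    ∀ z ∈ U,
      (∑ j, deriv G z j * deriv G z j) = 0 ∧
      (∑ j, deriv (deriv G) z j * deriv (deriv G) z j) = 0 ∧
      deriv G z ≠ 0 ∧
      ((inner ℝ (fderiv ℝ g z 1) (fderiv ℝ g z Complex.I) : ℝ) = 0 ∧
        ‖fderiv ℝ g z 1‖ = ‖fderiv ℝ g z Complex.I‖ ∧
        fderiv ℝ g z 1 ≠ 0 ∧
        ∀ j, laplacianC (fun w => g w j) z = 0) := by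
  intro z hz
  have hzU : U ∈ nhds z := hU.mem_nhds hz
  have hβ₂d : HasDerivAt β₂ (deriv β₂ z) z := (hβ₂.differentiableAt hzU).hasDerivAt
  have hGz := hG z hz
  have hGderiv : deriv G z = α₂ z := hGz.deriv
  have hφ₁z := hφ₁ z hz
  have hφ₁c : ∀ j, HasDerivAt (fun w => φ₁ w j) (α₁ z j) z := hasDerivAt_pi.mp hφ₁z
  -- Part (i)
  have part1 : (∑ j, deriv G z j * deriv G z j) = 0 := by
    rw [hGderiv, hα₂ z, sum_cons_sq]
    linear_combination iso_aux (k + 2) (β₂ z) (φ₁ z)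
  -- Part (ii)
  have hs₁ : HasDerivAt (fun w => ∑ j, φ₁ w j * φ₁ w j)
      (∑ j, (α₁ z j * φ₁ z j + φ₁ z j * α₁ z j)) z :=
    HasDerivAt.fun_sum fun j _ => (hφ₁c j).mul (hφ₁c j)
  have hα₂D : HasDerivAt α₂
      (Fin.cons (deriv β₂ z * (1 - ∑ j, φ₁ z j * φ₁ z j)
          + β₂ z * -(∑ j, (α₁ z j * φ₁ z j + φ₁ z j * α₁ z j)))
        (Fin.cons (I * (deriv β₂ z * (1 + ∑ j, φ₁ z j * φ₁ z j)
            + β₂ z * ∑ j, (α₁ z j * φ₁ z j + φ₁ z j * α₁ z j)))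
          (fun j => 2 * deriv β₂ z * φ₁ z j + 2 * β₂ z * α₁ z j))) z := by
    have heq : α₂ = fun w => Fin.cons (β₂ w * (1 - ∑ j, φ₁ w j * φ₁ w j))
        (Fin.cons (I * (β₂ w * (1 + ∑ j, φ₁ w j * φ₁ w j)))
          (fun j => 2 * β₂ w * φ₁ w j)) := funext hα₂
    rw [heq]
    refine hasDerivAt_pi.mpr fun i => ?_
    refine Fin.cases ?_ (fun i => ?_) i
    · simpa only [Fin.cons_zero] using hβ₂d.fun_mul (HasDerivAt.const_sub 1 hs₁)
    · refine Fin.cases ?_ (fun i => ?_) i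
      · simpa only [Fin.cons_succ, Fin.cons_zero] using
          HasDerivAt.const_mul I (hβ₂d.fun_mul (HasDerivAt.const_add 1 hs₁))
      · simpa only [Fin.cons_succ] using (HasDerivAt.const_mul 2 hβ₂d).fun_mul (hφ₁c i)
  have hderiv2 : deriv (deriv G) z = Fin.cons (deriv β₂ z * (1 - ∑ j, φ₁ z j * φ₁ z j)
          + β₂ z * -(∑ j, (α₁ z j * φ₁ z j + φ₁ z j * α₁ z j)))
        (Fin.cons (I * (deriv β₂ z * (1 + ∑ j, φ₁ z j * φ₁ z j)
            + β₂ z * ∑ j, (α₁ z j * φ₁ z j + φ₁ z j * α₁ z j)))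
          (fun j => 2 * deriv β₂ z * φ₁ z j + 2 * β₂ z * α₁ z j)) := by
    have hev : (fun w => deriv G w) =ᶠ[nhds z] α₂ := by
      filter_upwards [hzU] with w hw
      exact (hG w hw).deriv
    rw [hev.deriv_eq]
    exact hα₂D.deriv
  have hp : ∑ j, α₁ z j * α₁ z j = 0 := by
    rw [hα₁ z, sum_cons_sq]
    linear_combination iso_aux k (β₁ z) (φ₀ z)
  have part2 : (∑ j, deriv (deriv G) z j * deriv (deriv G) z j) = 0 := by
    rw [hderiv2, sum_cons_sq]
    linear_combination key2_aux (k + 2) (β₂ z) (deriv β₂ z) (φ₁ z) (α₁ z)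
      + 4 * (β₂ z * β₂ z) * hp
  -- Part (iii)
  have part3 : deriv G z ≠ 0 := by
    rw [hGderiv, hα₂ z]
    intro h
    have e0 : β₂ z * (1 - ∑ j, φ₁ z j * φ₁ z j) = 0 := by
      simpa only [Fin.cons_zero, Pi.zero_apply] using congrFun h 0
    have e1 : I * (β₂ z * (1 + ∑ j, φ₁ z j * φ₁ z j)) = 0 := by
      simpa only [Fin.cons_succ, Fin.cons_zero, Pi.zero_apply] using congrFun h (Fin.succ 0)
    have f0 : (1 : ℂ) - ∑ j, φ₁ z j * φ₁ z j = 0 :=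
      (mul_eq_zero.mp e0).resolve_left (hβ₂0 z hz)
    have f1 : (1 : ℂ) + ∑ j, φ₁ z j * φ₁ z j = 0 := by
      rcases mul_eq_zero.mp e1 with h' | h'
      · exact absurd h' I_ne_zero
      · exact (mul_eq_zero.mp h').resolve_left (hβ₂0 z hz)
    have : (2 : ℂ) = 0 := by linear_combination f0 + f1
    norm_num at this
  -- Part (iv)
  -- Part (iv)
  have h1' : ∑ j, α₂ z j * α₂ z j = 0 := hGderiv ▸ part1
  have hGc : ∀ j, HasDerivAt (fun w => G w j) (α₂ z j) z := hasDerivAt_pi.mp hGz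
  have hpi : HasFDerivAt (fun w => (fun j => (G w j).re))
      (ContinuousLinearMap.pi fun j => PhiRe (α₂ z j)) z :=
    hasFDerivAt_pi.mpr fun j => hasFDerivAt_re_comp _ _ _ (hGc j)
  have hgeq : g = fun w => (PiLp.continuousLinearEquiv 2 ℝ
      (fun _ : Fin (k + 4) => ℝ)).symm (fun j => (G w j).re) := by
    funext w
    ext j
    exact hg w j
  have hgF : HasFDerivAt g
      (((PiLp.continuousLinearEquiv 2 ℝ (fun _ : Fin (k + 4) => ℝ)).symm :
          (Fin (k + 4) → ℝ) →L[ℝ] EuclideanSpace ℝ (Fin (k + 4))).comp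
        (ContinuousLinearMap.pi fun j => PhiRe (α₂ z j))) z := by
    rw [hgeq]
    exact ((PiLp.continuousLinearEquiv 2 ℝ
      (fun _ : Fin (k + 4) => ℝ)).symm.hasFDerivAt).comp z hpi
  have hfg := hgF.fderiv
  have hx : ∀ j, fderiv ℝ g z 1 j = (α₂ z j).re := by
    intro j
    rw [hfg]
    simp
  have hy : ∀ j, fderiv ℝ g z Complex.I j = -((α₂ z j).im) := by
    intro j
    rw [hfg]
    simp [Complex.mul_re]
  have hre : ∑ j, ((α₂ z j).re * (α₂ z j).re - (α₂ z j).im * (α₂ z j).im) = 0 := by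
    have := congrArg Complex.re h1'
    simpa [Complex.re_sum, Complex.mul_re] using this
  have hxy : ∑ j, (α₂ z j).re * (α₂ z j).re = ∑ j, (α₂ z j).im * (α₂ z j).im := by
    rw [Finset.sum_sub_distrib] at hre
    linarith
  have him2 : ∑ j, (α₂ z j).re * (α₂ z j).im = 0 := by
    have h := congrArg Complex.im h1'
    rw [Complex.im_sum] at h
    have h2 : (2 : ℝ) * ∑ j, (α₂ z j).re * (α₂ z j).im
        = ∑ j, (α₂ z j * α₂ z j).im := by
      rw [Finset.mul_sum]
      exact Finset.sum_congr rfl fun j _ => by rw [Complex.mul_im]; ring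
    simp only [Complex.zero_im] at h
    rw [h] at h2
    linarith
  refine ⟨part1, part2, part3, ?_, ?_, ?_, ?_⟩
  · -- inner product zero
    rw [PiLp.inner_apply]
    have : ∑ j, (inner ℝ (fderiv ℝ g z 1 j) (fderiv ℝ g z Complex.I j) : ℝ)
        = ∑ j, -((α₂ z j).re * (α₂ z j).im) := by
      refine Finset.sum_congr rfl fun j _ => ?_
      rw [real_inner_comm]
      simp [hx j, hy j, mul_comm]
    rw [this, Finset.sum_neg_distrib, him2, neg_zero]
  · -- equal norms
    rw [EuclideanSpace.norm_eq, EuclideanSpace.norm_eq]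
    congr 1
    have e1 : ∑ j, ‖fderiv ℝ g z 1 j‖ ^ 2 = ∑ j, (α₂ z j).re * (α₂ z j).re :=
      Finset.sum_congr rfl fun j _ => by rw [hx j, Real.norm_eq_abs, _root_.sq_abs, pow_two]
    have e2 : ∑ j, ‖fderiv ℝ g z Complex.I j‖ ^ 2 = ∑ j, (α₂ z j).im * (α₂ z j).im :=
      Finset.sum_congr rfl fun j _ => by
        rw [hy j, Real.norm_eq_abs, abs_neg, _root_.sq_abs, pow_two]
    rw [e1, e2, hxy]
  · -- nonzero
    intro h0
    have hRe0 : ∀ j, (α₂ z j).re = 0 := by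
      intro j
      rw [← hx j, h0]
      rfl
    have hsum0 : ∑ j, (α₂ z j).im * (α₂ z j).im = 0 := by
      rw [← hxy]
      simp [hRe0]
    have hIm0 : ∀ j, (α₂ z j).im = 0 := by
      intro j
      have := (Finset.sum_eq_zero_iff_of_nonneg
        (fun i _ => mul_self_nonneg ((α₂ z i).im))).mp hsum0 j (Finset.mem_univ j)
      exact mul_self_eq_zero.mp this
    apply part3
    rw [hGderiv]
    funext j
    exact Complex.ext (by simpa using hRe0 j) (by simpa using hIm0 j)
  · -- harmonic components
    intro j
    have hfun : (fun w => g w j) = fun w => (G w j).re := funext fun w => hg w j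
    have hFw : ∀ w ∈ U, HasDerivAt (fun x => G x j) (α₂ w j) w :=
      fun w hw => hasDerivAt_pi.mp (hG w hw) j
    obtain ⟨A, hF'j⟩ : ∃ A, HasDerivAt (fun w => α₂ w j) A z :=
      ⟨_, hasDerivAt_pi.mp hα₂D j⟩
    unfold laplacianC
    rw [hfun, iteratedFDeriv_two_re_aux (fun x => G x j) (fun w => α₂ w j) U hU hFw z hz
        _ hF'j 1,
      iteratedFDeriv_two_re_aux (fun x => G x j) (fun w => α₂ w j) U hU hFw z hz
        _ hF'j Complex.I]
    have hAI : A * I * I = -A := by rw [mul_assoc, Complex.I_mul_I, mul_neg_one]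
    rw [hAI]
    simp
end
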